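/- arXiv:2210.12392 — 8 statements merged into one kernel-verified Lean document; each statement's English description precedes it below -/
import Mathlib

section
/- Let X be a countable index set, n > 0 a real number, (λ_x)_{x∈X} nonnegative reals with ∑_{x∈X} λ_x = n, and let (N_x)_{x∈X} be independent random variables with N_x ~ Poisson(λ_x). Then E[∑_{x∈X} N_x·1{N_x is even and N_x ≠ 0}] ≤ n/2 and E[∑_{x∈X} N_x·1{N_x is odd and N_x ≠ 1}] ≤ n/2. That is, excluding singletons, in expectation at most half of the n data items appear an even number of times, and at most half an odd number of times. -/
open MeasureTheory
open scoped ENNReal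

private lemma term_shift (l : ℝ) (j : ℕ) :
    ((j + 1 : ℕ) : ℝ) * (l ^ (j + 1) * Real.exp (-l) / (j + 1).factorial)
      = l * (l ^ j * Real.exp (-l) / j.factorial) := by
  have h1 : (j.factorial : ℝ) ≠ 0 := by positivity
  rw [Nat.factorial_succ, pow_succ]
  push_cast
  field_simp

private lemma even_bound (l : ℝ) (hl : 0 ≤ l) :
    ∑' k : ℕ, (if Even k ∧ k ≠ 0 then (k : ℝ≥0∞) else 0)
        * ENNReal.ofReal (l ^ k * Real.exp (-l) / k.factorial)
      ≤ ENNReal.ofReal (l / 2) := by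
  set t : ℕ → ℝ≥0∞ := fun k => (if Even k ∧ k ≠ 0 then (k : ℝ≥0∞) else 0)
      * ENNReal.ofReal (l ^ k * Real.exp (-l) / k.factorial) with ht
  have hshift : ∀ j : ℕ, t (j + 1)
      = if Odd j then ENNReal.ofReal (l * (l ^ j * Real.exp (-l) / j.factorial)) else 0 := by
    intro j
    show (if Even (j + 1) ∧ (j + 1) ≠ 0 then ((j + 1 : ℕ) : ℝ≥0∞) else 0)
        * ENNReal.ofReal (l ^ (j + 1) * Real.exp (-l) / (j + 1).factorial) = _
    by_cases hj : Odd j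
    · have hc : Even (j + 1) ∧ (j + 1) ≠ 0 := ⟨hj.add_one, j.succ_ne_zero⟩
      rw [if_pos hc, if_pos hj,
        (ENNReal.ofReal_natCast (j + 1)).symm,
        ← ENNReal.ofReal_mul (by positivity), term_shift]
    · have hc : ¬(Even (j + 1) ∧ (j + 1) ≠ 0) := by
        rintro ⟨he, -⟩
        exact hj (Nat.not_even_iff_odd.mp (Nat.even_add_one.mp he))
      rw [if_neg hc, zero_mul, if_neg hj]
  have ht0 : t 0 = 0 := by simp [ht]
  have hs : HasSum (fun m : ℕ => l * (l ^ (2 * m + 1) * Real.exp (-l) / (2 * m + 1).factorial))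
      (l * Real.exp (-l) * Real.sinh l) := by
    have heq : (fun m : ℕ => l * (l ^ (2 * m + 1) * Real.exp (-l) / (2 * m + 1).factorial))
        = fun m : ℕ => (l * Real.exp (-l)) * (l ^ (2 * m + 1) / (2 * m + 1).factorial) := by
      funext m; ring
    rw [heq]
    exact (Real.hasSum_sinh l).mul_left _
  calc ∑' k, t k = t 0 + ∑' j, t (j + 1) := tsum_eq_zero_add' ENNReal.summable
    _ = ∑' j, t (j + 1) := by rw [ht0, zero_add]
    _ = (∑' m, t (2 * m + 1)) + ∑' m, t (2 * m + 1 + 1) :=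
        (tsum_even_add_odd ENNReal.summable ENNReal.summable).symm
    _ = ∑' m, ENNReal.ofReal (l * (l ^ (2 * m + 1) * Real.exp (-l) / (2 * m + 1).factorial)) := by
        have h1 : ∀ m : ℕ, t (2 * m + 1) = 0 := by
          intro m; rw [hshift]
          have hno : ¬Odd (2 * m) := by rw [Nat.odd_iff]; omega
          exact if_neg hno
        have h2 : ∀ m : ℕ, t (2 * m + 1 + 1)
            = ENNReal.ofReal (l * (l ^ (2 * m + 1) * Real.exp (-l) / (2 * m + 1).factorial)) := by
          intro m; rw [hshift]
          have hodd : Odd (2 * m + 1) := ⟨m, by ring⟩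
          exact if_pos hodd
        simp_rw [h1, h2, tsum_zero, zero_add]
    _ = ENNReal.ofReal (l * Real.exp (-l) * Real.sinh l) := by
        rw [← ENNReal.ofReal_tsum_of_nonneg (fun m => by positivity) hs.summable, hs.tsum_eq]
    _ ≤ ENNReal.ofReal (l / 2) := by
        apply ENNReal.ofReal_le_ofReal
        rw [Real.sinh_eq]
        have h1 : Real.exp (-l) * Real.exp l = 1 := by rw [← Real.exp_add]; simp
        have h2 : l * Real.exp (-l) * ((Real.exp l - Real.exp (-l)) / 2)
            = (l * (Real.exp (-l) * Real.exp l) - l * Real.exp (-l) ^ 2) / 2 := by ring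
        rw [h2, h1]
        have h3 : 0 ≤ l * Real.exp (-l) ^ 2 := mul_nonneg hl (sq_nonneg _)
        linarith

private lemma odd_bound (l : ℝ) (hl : 0 ≤ l) :
    ∑' k : ℕ, (if Odd k ∧ k ≠ 1 then (k : ℝ≥0∞) else 0)
        * ENNReal.ofReal (l ^ k * Real.exp (-l) / k.factorial)
      ≤ ENNReal.ofReal (l / 2) := by
  set t : ℕ → ℝ≥0∞ := fun k => (if Odd k ∧ k ≠ 1 then (k : ℝ≥0∞) else 0)
      * ENNReal.ofReal (l ^ k * Real.exp (-l) / k.factorial) with ht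
  have hshift : ∀ j : ℕ, t (j + 1)
      = if Even j ∧ j ≠ 0 then ENNReal.ofReal (l * (l ^ j * Real.exp (-l) / j.factorial))
        else 0 := by
    intro j
    show (if Odd (j + 1) ∧ (j + 1) ≠ 1 then ((j + 1 : ℕ) : ℝ≥0∞) else 0)
        * ENNReal.ofReal (l ^ (j + 1) * Real.exp (-l) / (j + 1).factorial) = _
    by_cases hj : Even j ∧ j ≠ 0
    · have hc : Odd (j + 1) ∧ (j + 1) ≠ 1 := ⟨hj.1.add_one, by omega⟩
      rw [if_pos hc, if_pos hj,
        (ENNReal.ofReal_natCast (j + 1)).symm,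
        ← ENNReal.ofReal_mul (by positivity), term_shift]
    · have hc : ¬(Odd (j + 1) ∧ (j + 1) ≠ 1) := by
        rintro ⟨ho, hne⟩
        exact hj ⟨Nat.not_odd_iff_even.mp (Nat.odd_add_one.mp ho), by omega⟩
      rw [if_neg hc, zero_mul, if_neg hj]
  have ht0 : t 0 = 0 := by simp [ht]
  have hc : HasSum (fun m : ℕ => l * (l ^ (2 * m + 2) * Real.exp (-l) / (2 * m + 2).factorial))
      (l * Real.exp (-l) * (Real.cosh l - 1)) := by
    have hc0 : HasSum (fun m : ℕ => l ^ (2 * (m + 1)) / ((2 * (m + 1)).factorial : ℝ))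
        (Real.cosh l - 1) := by
      have := (hasSum_nat_add_iff' (f := fun m : ℕ => l ^ (2 * m) / ((2 * m).factorial : ℝ))
        1).mpr (Real.hasSum_cosh l)
      simpa using this
    have heq : (fun m : ℕ => l * (l ^ (2 * m + 2) * Real.exp (-l) / (2 * m + 2).factorial))
        = fun m : ℕ => (l * Real.exp (-l)) * (l ^ (2 * (m + 1)) / (2 * (m + 1)).factorial) := by
      funext m
      have h2 : 2 * (m + 1) = 2 * m + 2 := by ring
      rw [h2]; ring
    rw [heq]
    exact hc0.mul_left _
  calc ∑' k, t k = t 0 + ∑' j, t (j + 1) := tsum_eq_zero_add' ENNReal.summable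
    _ = ∑' j, t (j + 1) := by rw [ht0, zero_add]
    _ = (∑' m, t (2 * m + 1)) + ∑' m, t (2 * m + 1 + 1) :=
        (tsum_even_add_odd ENNReal.summable ENNReal.summable).symm
    _ = ∑' m, t (2 * m + 1) := by
        have h2 : ∀ m : ℕ, t (2 * m + 1 + 1) = 0 := by
          intro m; rw [hshift]
          exact if_neg (by simp [parity_simps])
        simp_rw [h2, tsum_zero, add_zero]
    _ = t (2 * 0 + 1) + ∑' m, t (2 * (m + 1) + 1) :=
        tsum_eq_zero_add' (f := fun m : ℕ => t (2 * m + 1)) ENNReal.summable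
    _ = ∑' m, ENNReal.ofReal (l * (l ^ (2 * m + 2) * Real.exp (-l) / (2 * m + 2).factorial)) := by
        have h1 : t (2 * 0 + 1) = 0 := by
          rw [show 2 * 0 + 1 = 0 + 1 from rfl, hshift]; simp
        have h2 : ∀ m : ℕ, t (2 * (m + 1) + 1)
            = ENNReal.ofReal (l * (l ^ (2 * m + 2) * Real.exp (-l) / (2 * m + 2).factorial)) := by
          intro m
          rw [show 2 * (m + 1) + 1 = (2 * m + 2) + 1 by ring, hshift]
          have hyes : Even (2 * m + 2) ∧ 2 * m + 2 ≠ 0 := ⟨⟨m + 1, by ring⟩, by omega⟩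
          exact if_pos hyes
        simp_rw [h1, h2, zero_add]
    _ = ENNReal.ofReal (l * Real.exp (-l) * (Real.cosh l - 1)) := by
        rw [← ENNReal.ofReal_tsum_of_nonneg (fun m => by positivity) hc.summable, hc.tsum_eq]
    _ ≤ ENNReal.ofReal (l / 2) := by
        apply ENNReal.ofReal_le_ofReal
        rw [Real.cosh_eq]
        have h1 : Real.exp (-l) * Real.exp l = 1 := by rw [← Real.exp_add]; simp
        have h2 : Real.exp (-l) ≤ 1 := Real.exp_le_one_iff.mpr (by linarith)
        have h3 : l * Real.exp (-l) * ((Real.exp l + Real.exp (-l)) / 2 - 1)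
            = (l * (Real.exp (-l) * Real.exp l) + l * Real.exp (-l) ^ 2
              - 2 * (l * Real.exp (-l))) / 2 := by ring
        rw [h3, h1]
        nlinarith [mul_nonneg hl (Real.exp_pos (-l)).le, h2]

private lemma lintegral_comp_sum_bound {Ω X : Type*} [MeasurableSpace Ω] [Countable X]
    (μ : Measure Ω) (lam : X → ℝ) (n : ℝ) (hlam : ∀ x, 0 ≤ lam x) (hsum : HasSum lam n)
    (N : X → Ω → ℕ) (hmeas : ∀ x, Measurable (N x))
    (hdist : ∀ x k, μ {ω | N x ω = k}
      = ENNReal.ofReal (lam x ^ k * Real.exp (-lam x) / k.factorial))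
    (g : ℕ → ℝ≥0∞)
    (hg : ∀ l : ℝ, 0 ≤ l →
      ∑' k : ℕ, g k * ENNReal.ofReal (l ^ k * Real.exp (-l) / k.factorial)
        ≤ ENNReal.ofReal (l / 2)) :
    ∫⁻ ω, ∑' x, g (N x ω) ∂μ ≤ ENNReal.ofReal (n / 2) := by
  rw [lintegral_tsum (f := fun x ω => g (N x ω)) (fun x =>
    ((measurable_from_top.comp (hmeas x) : Measurable fun ω => g (N x ω))).aemeasurable)]
  have hx : ∀ x, ∫⁻ ω, g (N x ω) ∂μ ≤ ENNReal.ofReal (lam x / 2) := by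
    intro x
    have hmap : ∫⁻ ω, g (N x ω) ∂μ = ∫⁻ k, g k ∂(μ.map (N x)) :=
      (lintegral_map measurable_from_top (hmeas x)).symm
    rw [hmap, lintegral_countable']
    have hsing : ∀ k : ℕ, (μ.map (N x)) {k}
        = ENNReal.ofReal (lam x ^ k * Real.exp (-lam x) / k.factorial) := by
      intro k
      rw [Measure.map_apply (hmeas x) (measurableSet_singleton k)]
      exact hdist x k
    simp_rw [hsing]
    exact hg (lam x) (hlam x)
  calc ∑' x, ∫⁻ ω, g (N x ω) ∂μ ≤ ∑' x, ENNReal.ofReal (lam x / 2) :=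
        ENNReal.tsum_le_tsum hx
    _ = ENNReal.ofReal (n / 2) := by
        rw [← ENNReal.ofReal_tsum_of_nonneg (fun x => div_nonneg (hlam x) (by norm_num))
          (hsum.div_const 2).summable, (hsum.div_const 2).tsum_eq]

/-- Even/odd test expectation bounds: if `N_x` are independent Poisson(`λ_x`) with
`∑_x λ_x = n`, then `E[∑_x N_x·1{N_x even, N_x ≠ 0}] ≤ n/2` and
`E[∑_x N_x·1{N_x odd, N_x ≠ 1}] ≤ n/2`. -/
theorem even_odd_test_expectation_bound
    (Ω : Type*) [MeasurableSpace Ω] (μ : Measure Ω) [IsProbabilityMeasure μ]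
    (X : Type*) [Countable X]
    (n : ℝ) (hn : 0 < n) (lam : X → ℝ) (hlam : ∀ x, 0 ≤ lam x) (hsum : HasSum lam n)
    (N : X → Ω → ℕ) (hmeas : ∀ x, Measurable (N x))
    (hindep : ProbabilityTheory.iIndepFun N μ)
    (hdist : ∀ x k, μ {ω | N x ω = k}
      = ENNReal.ofReal (lam x ^ k * Real.exp (-lam x) / k.factorial)) :
    (∫⁻ ω, ∑' x, (if Even (N x ω) ∧ N x ω ≠ 0 then (N x ω : ℝ≥0∞) else 0) ∂μ
        ≤ ENNReal.ofReal (n / 2))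
    ∧ (∫⁻ ω, ∑' x, (if Odd (N x ω) ∧ N x ω ≠ 1 then (N x ω : ℝ≥0∞) else 0) ∂μ
        ≤ ENNReal.ofReal (n / 2)) := by
  constructor
  · exact lintegral_comp_sum_bound μ lam n hlam hsum N hmeas hdist
      (fun k => if Even k ∧ k ≠ 0 then (k : ℝ≥0∞) else 0) even_bound
  · exact lintegral_comp_sum_bound μ lam n hlam hsum N hmeas hdist
      (fun k => if Odd k ∧ k ≠ 1 then (k : ℝ≥0∞) else 0) odd_bound
end

section
/- Fix an integer k ≥ 2 and define g_δ(λ) := λ^k e^{−λ}/k! − λ^{k−1} e^{−λ}/(k−1)! for λ > 0 (the difference of the Poisson(λ) probability mass function at k and at k−1). Then λ* := k − 1/2 + √(k + 1/4) is the global maximizer of g_δ(λ)/λ over λ > 0; that is, g_δ(λ)/λ ≤ g_δ(λ*)/λ* for all λ > 0. -/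
open Real

private lemma phi_deriv (m : ℕ) (K : ℝ) (x : ℝ) (hx0 : 0 < x) (hxK : K < x) (hK : 0 < K) :
    HasDerivAt (fun y : ℝ => -y + m * Real.log y + Real.log (y - K))
      (-1 + m / x + 1 / (x - K)) x := by
  have h1 : HasDerivAt (fun y : ℝ => -y) (-1 : ℝ) x := (hasDerivAt_id x).neg
  have h2 : HasDerivAt (fun y : ℝ => (m : ℝ) * Real.log y) ((m : ℝ) * x⁻¹) x :=
    ((Real.hasDerivAt_log hx0.ne').const_mul (m : ℝ))
  have h3 : HasDerivAt (fun y : ℝ => y - K) (1 : ℝ) x := (hasDerivAt_id x).sub_const K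
  have h4 : HasDerivAt (fun y : ℝ => Real.log (y - K)) (1 / (x - K)) x := by
    have := h3.log (by linarith : x - K ≠ 0)
    simpa using this
  have := (h1.add h2).add h4
  rw [div_eq_mul_inv (m : ℝ) x]; exact this


private lemma exp_phi (m : ℕ) (K : ℝ) (x : ℝ) (hx0 : 0 < x) (hxK : K < x) :
    Real.exp (-x + m * Real.log x + Real.log (x - K))
      = Real.exp (-x) * x ^ m * (x - K) := by
  rw [Real.exp_add, Real.exp_add, Real.exp_nat_mul, Real.exp_log hx0,
    Real.exp_log (by linarith)]

/-- Core inequality: for `a > K := m+2` a root of `x² = (2K-1)x - K·m`,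
`e^{-l} l^m (l - K) ≤ e^{-a} a^m (a - K)` for all `l > 0`. -/
private lemma core (m : ℕ) (a : ℝ)
    (haK : (m : ℝ) + 2 < a)
    (hroot : a ^ 2 = (2 * ((m : ℝ) + 2) - 1) * a - ((m : ℝ) + 2) * m) :
    ∀ l : ℝ, 0 < l →
      Real.exp (-l) * l ^ m * (l - ((m : ℝ) + 2))
        ≤ Real.exp (-a) * a ^ m * (a - ((m : ℝ) + 2)) := by
  set K : ℝ := (m : ℝ) + 2 with hKdef
  have hK0 : (0 : ℝ) < K := by positivity
  have ha0 : 0 < a := lt_trans hK0 haK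
  intro l hl
  rcases le_or_gt l K with hlK | hlK
  · -- LHS ≤ 0 ≤ RHS
    have h1 : Real.exp (-l) * l ^ m * (l - K) ≤ 0 := by
      apply mul_nonpos_of_nonneg_of_nonpos
      · positivity
      · linarith
    have h2 : 0 ≤ Real.exp (-a) * a ^ m * (a - K) := by
      apply mul_nonneg
      · positivity
      · linarith
    linarith
  · -- K < l : use the log and monotonicity
    set φ : ℝ → ℝ := fun y => -y + m * Real.log y + Real.log (y - K) with hφ
    -- sign of the derivative
    have hderiv : ∀ x : ℝ, K < x →
        HasDerivAt φ (-1 + m / x + 1 / (x - K)) x := fun x hx =>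
      phi_deriv m K x (lt_trans hK0 hx) hx hK0
    have hsign : ∀ x : ℝ, K < x →
        (-1 + m / x + 1 / (x - K)) = (a - x) * (x - (2 * K - 1 - a)) / (x * (x - K)) := by
      intro x hx
      have hx0 : (0 : ℝ) < x := lt_trans hK0 hx
      have hxK : (0 : ℝ) < x - K := by linarith
      have hab : a * (2 * K - 1 - a) = K * m := by nlinarith [hroot]
      field_simp
      nlinarith [hab]
    have hb_lt_K : 2 * K - 1 - a < K := by linarith
    -- φ l ≤ φ a
    have hφle : φ l ≤ φ a := by
      rcases lt_trichotomy l a with hla | hla | hla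
      · -- increasing on [l, a]
        have hmono : StrictMonoOn φ (Set.Icc l a) := by
          apply strictMonoOn_of_deriv_pos (convex_Icc l a)
          · intro x hx
            exact ((hderiv x (lt_of_lt_of_le hlK hx.1)).continuousAt).continuousWithinAt
          · intro x hx
            rw [interior_Icc] at hx
            have hxK : K < x := lt_trans hlK hx.1
            rw [(hderiv x hxK).deriv, hsign x hxK]
            have hx0 : (0 : ℝ) < x := lt_trans hK0 hxK
            apply div_pos
            · apply mul_pos <;> nlinarith [hx.1, hx.2]
            · apply mul_pos hx0; linarith
        exact le_of_lt (hmono (Set.left_mem_Icc.2 hla.le) (Set.right_mem_Icc.2 hla.le) hla)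
      · rw [hla]
      · -- decreasing on [a, l]
        have hmono : StrictAntiOn φ (Set.Icc a l) := by
          apply strictAntiOn_of_deriv_neg (convex_Icc a l)
          · intro x hx
            exact ((hderiv x (lt_of_lt_of_le haK hx.1)).continuousAt).continuousWithinAt
          · intro x hx
            rw [interior_Icc] at hx
            have hxK : K < x := lt_trans haK hx.1
            rw [(hderiv x hxK).deriv, hsign x hxK]
            have hx0 : (0 : ℝ) < x := lt_trans hK0 hxK
            apply div_neg_of_neg_of_pos
            · apply mul_neg_of_neg_of_pos
              · linarith [hx.1]
              · nlinarith [hx.1]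
            · apply mul_pos hx0; linarith
        exact le_of_lt (hmono (Set.left_mem_Icc.2 hla.le) (Set.right_mem_Icc.2 hla.le) hla)
    have := Real.exp_le_exp.2 hφle
    rwa [hφ, exp_phi m K l (lt_trans hK0 hlK) hlK, exp_phi m K a ha0 haK] at this

/-- For `k ≥ 2`, `λ* = k - 1/2 + √(k + 1/4)` is the global maximizer over `λ > 0` of
`g_δ(λ)/λ`, where `g_δ(λ) = λ^k e^{-λ}/k! - λ^{k-1} e^{-λ}/(k-1)!` is the slope of the
Poisson pmf. -/
theorem slope_test_maximizer (k : ℕ) (hk : 2 ≤ k) :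
    ∀ l : ℝ, 0 < l →
      (l ^ k * Real.exp (-l) / k.factorial
          - l ^ (k - 1) * Real.exp (-l) / (k - 1).factorial) / l
      ≤ (((k : ℝ) - 1 / 2 + Real.sqrt ((k : ℝ) + 1 / 4)) ^ k
            * Real.exp (-((k : ℝ) - 1 / 2 + Real.sqrt ((k : ℝ) + 1 / 4))) / k.factorial
          - ((k : ℝ) - 1 / 2 + Real.sqrt ((k : ℝ) + 1 / 4)) ^ (k - 1)
            * Real.exp (-((k : ℝ) - 1 / 2 + Real.sqrt ((k : ℝ) + 1 / 4))) / (k - 1).factorial)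
        / ((k : ℝ) - 1 / 2 + Real.sqrt ((k : ℝ) + 1 / 4)) := by
  obtain ⟨m, rfl⟩ : ∃ m, k = m + 2 := ⟨k - 2, by omega⟩
  intro l hl
  set s : ℝ := Real.sqrt (((m + 2 : ℕ) : ℝ) + 1 / 4) with hs
  have hs0 : 0 ≤ s := Real.sqrt_nonneg _
  have hs2 : s ^ 2 = ((m + 2 : ℕ) : ℝ) + 1 / 4 := by
    rw [hs]; exact Real.sq_sqrt (by positivity)
  set a : ℝ := ((m + 2 : ℕ) : ℝ) - 1 / 2 + s with ha
  have hcast : ((m + 2 : ℕ) : ℝ) = (m : ℝ) + 2 := by push_cast; ring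
  have haK : (m : ℝ) + 2 < a := by
    have : 1 / 2 < s := by nlinarith [hs2, hcast]
    rw [ha, hcast]; linarith
  have hroot : a ^ 2 = (2 * ((m : ℝ) + 2) - 1) * a - ((m : ℝ) + 2) * m := by
    rw [ha, hcast]; nlinarith [hs2, hcast]
  have ha0 : 0 < a := by
    have hm0 : (0:ℝ) ≤ (m:ℝ) := Nat.cast_nonneg m
    linarith
  -- simplify indices and factorials
  have hidx : m + 2 - 1 = m + 1 := rfl
  have hfact : ((m + 2).factorial : ℝ) = ((m : ℝ) + 2) * ((m + 1).factorial : ℝ) := by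
    rw [Nat.factorial_succ]; push_cast; ring
  have hfactpos : (0 : ℝ) < ((m + 2).factorial : ℝ) := by positivity
  have key : ∀ x : ℝ, 0 < x →
      (x ^ (m + 2) * Real.exp (-x) / ((m + 2).factorial : ℝ)
          - x ^ (m + 2 - 1) * Real.exp (-x) / ((m + 2 - 1).factorial : ℝ)) / x
        = Real.exp (-x) * x ^ m * (x - ((m : ℝ) + 2)) / ((m + 2).factorial : ℝ) := by
    intro x hx
    rw [hidx, hfact]
    have h1 : ((m + 1).factorial : ℝ) ≠ 0 := by positivity
    field_simp
    ring
  rw [key l hl, key a ha0]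
  exact div_le_div_of_nonneg_right (core m a haK hroot l hl) hfactpos.le
end

section
/- Fix an integer k ≥ 2 and define g_γ(λ) := 2·λ^k e^{−λ}/k! − λ^{k−1} e^{−λ}/(k−1)! − λ^{k+1} e^{−λ}/(k+1)! for λ > 0. Then for all λ > 0, g_γ(λ)/λ ≤ g_γ(k)/k = k^{k−1} e^{−k}/((k+1)·k!); that is, λ = k is a global maximizer of g_γ(λ)/λ over λ > 0. Consequently, if (λ_x)_{x∈X} are nonnegative reals over a countable index set with ∑_x λ_x = n, then ∑_x g_γ(λ_x) ≤ n·k^{k−1} e^{−k}/((k+1)·k!). -/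
theorem aux_pow_exp (k : ℕ) (l : ℝ) (hl : 0 < l) (hk : 0 < k) :
    l ^ k * Real.exp (-l) ≤ (k:ℝ) ^ k * Real.exp (-(k:ℝ)) := by
  have hk' : (0:ℝ) < k := by exact_mod_cast hk
  have h1 : l / k ≤ Real.exp (l / k - 1) := by
    have := Real.add_one_le_exp (l / k - 1); linarith
  have h2 : (l / k) ^ k ≤ Real.exp (l / k - 1) ^ k :=
    pow_le_pow_left₀ (by positivity) h1 k
  have h3 : Real.exp (l / k - 1) ^ k = Real.exp (l - k) := by
    rw [← Real.exp_nat_mul]; congr 1; field_simp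
  rw [h3, div_pow] at h2
  have h4 : l ^ k ≤ Real.exp (l - (k:ℝ)) * (k:ℝ) ^ k := by
    rw [div_le_iff₀ (by positivity)] at h2
    linarith
  have h5 : Real.exp (l - k) * Real.exp (-l) = Real.exp (-(k:ℝ)) := by
    rw [← Real.exp_add]; ring_nf
  calc l ^ k * Real.exp (-l) ≤ (Real.exp (l - k) * k ^ k) * Real.exp (-l) := by
        apply mul_le_mul_of_nonneg_right h4 (Real.exp_nonneg _)
    _ = (Real.exp (l - k) * Real.exp (-l)) * k ^ k := by ring
    _ = (k:ℝ) ^ k * Real.exp (-(k:ℝ)) := by rw [h5]; ring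

theorem aux_main (k : ℕ) (hk : 2 ≤ k) (l : ℝ) (hl : 0 < l) :
    (2 * l ^ k * Real.exp (-l) / k.factorial
          - l ^ (k - 1) * Real.exp (-l) / (k - 1).factorial
          - l ^ (k + 1) * Real.exp (-l) / (k + 1).factorial) / l
      ≤ (k : ℝ) ^ (k - 1) * Real.exp (-(k : ℝ)) / (((k : ℝ) + 1) * k.factorial) := by
  obtain ⟨m, rfl⟩ : ∃ m, k = m + 2 := ⟨k - 2, by omega⟩
  have hsub : m + 2 - 1 = m + 1 := rfl
  rw [hsub]
  set E := Real.exp (-l) with hEdef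
  have hE : 0 < E := Real.exp_pos _
  set A : ℝ := ((m+1).factorial : ℝ) with hAdef
  have hA : 0 < A := by positivity
  have c2 : (0:ℝ) < (m:ℝ) + 2 := by positivity
  have c3 : (0:ℝ) < (m:ℝ) + 3 := by positivity
  have f2 : (((m+2).factorial : ℕ) : ℝ) = ((m:ℝ) + 2) * A := by
    rw [show m + 2 = (m+1) + 1 from rfl, Nat.factorial_succ]
    push_cast [hAdef]; ring
  have f3 : (((m+3).factorial : ℕ) : ℝ) = ((m:ℝ) + 3) * (((m:ℝ) + 2) * A) := by
    rw [show m + 3 = (m+2) + 1 from rfl, Nat.factorial_succ]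
    push_cast [f2]; ring
  have hEk : 0 < Real.exp (-(((m:ℕ)+2:ℕ):ℝ)) := Real.exp_pos _
  have hpow := aux_pow_exp (m+2) l hl (by omega)
  rw [show ((m:ℕ)+2+1 : ℕ) = m + 3 from rfl, f2, f3]
  push_cast
  push_cast at hpow
  calc (2 * l ^ (m+2) * E / (((m:ℝ) + 2) * A)
          - l ^ (m+1) * E / A
          - l ^ (m+3) * E / (((m:ℝ) + 3) * (((m:ℝ) + 2) * A))) / l
      = l ^ m * (2*((m:ℝ)+3)*l - ((m:ℝ)+3)*((m:ℝ)+2) - l^2) * E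
          / (((m:ℝ)+3) * (((m:ℝ)+2) * A)) := by
        field_simp
        ring
    _ ≤ l ^ (m+2) * E / (((m:ℝ)+2) * (((m:ℝ)+3) * (((m:ℝ)+2) * A))) := by
        rw [div_le_div_iff₀ (by positivity) (by positivity)]
        have key2 : l ^ m * (2*((m:ℝ)+3)*l - ((m:ℝ)+3)*((m:ℝ)+2) - l^2) * ((m:ℝ)+2)
            ≤ l ^ (m+2) := by
          have hnn : 0 ≤ l ^ m * (((m:ℝ)+3) * (l - ((m:ℝ)+2))^2) := by positivity
          have hp : l ^ (m+2) = l ^ m * l ^ 2 := by ring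
          nlinarith [hnn, hp]
        nlinarith [mul_le_mul_of_nonneg_right key2
          (show (0:ℝ) ≤ E * (((m:ℝ)+3) * (((m:ℝ)+2) * A)) by positivity)]
    _ ≤ ((m:ℝ)+2) ^ (m+2) * Real.exp (-((m:ℝ)+2))
          / (((m:ℝ)+2) * (((m:ℝ)+3) * (((m:ℝ)+2) * A))) := by
        gcongr
    _ = ((m:ℝ)+2) ^ (m+1) * Real.exp (-((m:ℝ)+2)) / (((m:ℝ)+2+1) * (((m:ℝ)+2) * A)) := by
        field_simp
        ring


theorem aux_eq (k : ℕ) (hk : 2 ≤ k) :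
    (2 * (k : ℝ) ^ k * Real.exp (-(k : ℝ)) / k.factorial
          - (k : ℝ) ^ (k - 1) * Real.exp (-(k : ℝ)) / (k - 1).factorial
          - (k : ℝ) ^ (k + 1) * Real.exp (-(k : ℝ)) / (k + 1).factorial) / (k : ℝ)
        = (k : ℝ) ^ (k - 1) * Real.exp (-(k : ℝ)) / (((k : ℝ) + 1) * k.factorial) := by
  obtain ⟨m, rfl⟩ : ∃ m, k = m + 2 := ⟨k - 2, by omega⟩
  have hsub : m + 2 - 1 = m + 1 := rfl
  rw [hsub]
  set A : ℝ := ((m+1).factorial : ℝ) with hAdef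
  have hA : 0 < A := by positivity
  have f2 : (((m+2).factorial : ℕ) : ℝ) = ((m:ℝ) + 2) * A := by
    rw [show m + 2 = (m+1) + 1 from rfl, Nat.factorial_succ]
    push_cast [hAdef]; ring
  have f3 : (((m+3).factorial : ℕ) : ℝ) = ((m:ℝ) + 3) * (((m:ℝ) + 2) * A) := by
    rw [show m + 3 = (m+2) + 1 from rfl, Nat.factorial_succ]
    push_cast [f2]; ring
  rw [show ((m:ℕ)+2+1 : ℕ) = m + 3 from rfl, f2, f3]
  push_cast
  have hE : (0:ℝ) < Real.exp (-((m:ℝ)+2)) := Real.exp_pos _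
  field_simp
  ring


/-- For `k ≥ 2`, `λ = k` is a global maximizer over `λ > 0` of `g_γ(λ)/λ`, where
`g_γ(λ) = 2λ^k e^{-λ}/k! - λ^{k-1} e^{-λ}/(k-1)! - λ^{k+1} e^{-λ}/(k+1)!` is the
negative curvature of the Poisson pmf, with maximal value `k^{k-1} e^{-k}/((k+1)·k!)`;
consequently if `λ_x ≥ 0` sum to `n`, then `∑_x g_γ(λ_x) ≤ n·k^{k-1} e^{-k}/((k+1)·k!)`. -/
theorem curvature_test_bound (k : ℕ) (hk : 2 ≤ k) :
    (∀ l : ℝ, 0 < l →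
      (2 * l ^ k * Real.exp (-l) / k.factorial
          - l ^ (k - 1) * Real.exp (-l) / (k - 1).factorial
          - l ^ (k + 1) * Real.exp (-l) / (k + 1).factorial) / l
      ≤ (2 * (k : ℝ) ^ k * Real.exp (-(k : ℝ)) / k.factorial
          - (k : ℝ) ^ (k - 1) * Real.exp (-(k : ℝ)) / (k - 1).factorial
          - (k : ℝ) ^ (k + 1) * Real.exp (-(k : ℝ)) / (k + 1).factorial) / (k : ℝ))
    ∧ (2 * (k : ℝ) ^ k * Real.exp (-(k : ℝ)) / k.factorial
          - (k : ℝ) ^ (k - 1) * Real.exp (-(k : ℝ)) / (k - 1).factorial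
          - (k : ℝ) ^ (k + 1) * Real.exp (-(k : ℝ)) / (k + 1).factorial) / (k : ℝ)
        = (k : ℝ) ^ (k - 1) * Real.exp (-(k : ℝ)) / (((k : ℝ) + 1) * k.factorial)
    ∧ ∀ (X : Type) (_ : Countable X) (lam : X → ℝ) (n : ℝ),
        (∀ x, 0 ≤ lam x) → HasSum lam n →
        ∑' x, (2 * lam x ^ k * Real.exp (-lam x) / k.factorial
            - lam x ^ (k - 1) * Real.exp (-lam x) / (k - 1).factorial
            - lam x ^ (k + 1) * Real.exp (-lam x) / (k + 1).factorial)
          ≤ n * (k : ℝ) ^ (k - 1) * Real.exp (-(k : ℝ)) / (((k : ℝ) + 1) * k.factorial) := by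
  have heq := aux_eq k hk
  refine ⟨fun l hl => by rw [heq]; exact aux_main k hk l hl, heq, ?_⟩
  intro X _ lam n hnn hsum
  set C : ℝ := (k : ℝ) ^ (k - 1) * Real.exp (-(k : ℝ)) / (((k : ℝ) + 1) * k.factorial)
    with hC
  have hC0 : 0 ≤ C := by positivity
  have hterm : ∀ x, (2 * lam x ^ k * Real.exp (-lam x) / k.factorial
            - lam x ^ (k - 1) * Real.exp (-lam x) / (k - 1).factorial
            - lam x ^ (k + 1) * Real.exp (-lam x) / (k + 1).factorial) ≤ lam x * C := by
    intro x
    rcases eq_or_lt_of_le (hnn x) with h0 | hpos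
    · rw [← h0]
      have z1 : (0:ℝ) ^ k = 0 := zero_pow (by omega)
      have z2 : (0:ℝ) ^ (k - 1) = 0 := zero_pow (by omega)
      have z3 : (0:ℝ) ^ (k + 1) = 0 := zero_pow (by omega)
      rw [z1, z2, z3]
      simp
    · have := aux_main k hk (lam x) hpos
      rw [← hC, div_le_iff₀ hpos] at this
      linarith
  have hn0 : 0 ≤ n := hasSum_le hnn hasSum_zero hsum
  have hRHS : n * (k : ℝ) ^ (k - 1) * Real.exp (-(k : ℝ)) / (((k : ℝ) + 1) * k.factorial)
      = n * C := by rw [hC]; ring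
  rw [hRHS]
  by_cases hs : Summable (fun x => 2 * lam x ^ k * Real.exp (-lam x) / k.factorial
            - lam x ^ (k - 1) * Real.exp (-lam x) / (k - 1).factorial
            - lam x ^ (k + 1) * Real.exp (-lam x) / (k + 1).factorial)
  · calc ∑' x, (2 * lam x ^ k * Real.exp (-lam x) / k.factorial
            - lam x ^ (k - 1) * Real.exp (-lam x) / (k - 1).factorial
            - lam x ^ (k + 1) * Real.exp (-lam x) / (k + 1).factorial)
        ≤ ∑' x, lam x * C := Summable.tsum_le_tsum hterm hs (hsum.summable.mul_right C)
      _ = n * C := by rw [tsum_mul_right, hsum.tsum_eq]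
  · rw [tsum_eq_zero_of_not_summable hs]
    exact mul_nonneg hn0 hC0
end

section
/- Let k ≥ 1 be an integer, X a countable index set, and (λ_x)_{x∈X} nonnegative reals such that μ_j := ∑_{x∈X} λ_x^j e^{−λ_x}/j! is finite for j = k−1, k, k+1. Then k·μ_k² ≤ (k+1)·μ_{k−1}·μ_{k+1}. Equivalently, when all three quantities are positive, the logarithmic curvature satisfies 2 ln μ_k − ln μ_{k−1} − ln μ_{k+1} ≤ ln((k+1)/k) ≤ 1/k. -/
lemma tsum_cauchy_schwarz {X : Type*} (f g : X → ℝ) (hf0 : ∀ x, 0 ≤ f x) (hg0 : ∀ x, 0 ≤ g x)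
    (hf : Summable (fun x => f x ^ 2)) (hg : Summable (fun x => g x ^ 2)) :
    (∑' x, f x * g x) ^ 2 ≤ (∑' x, f x ^ 2) * (∑' x, g x ^ 2) := by
  set A := ∑' x, f x ^ 2
  set B := ∑' x, g x ^ 2
  have hA : 0 ≤ A := tsum_nonneg fun x => sq_nonneg _
  have hB : 0 ≤ B := tsum_nonneg fun x => sq_nonneg _
  have hfg : Summable (fun x => f x * g x) := by
    apply Summable.of_nonneg_of_le (fun x => mul_nonneg (hf0 x) (hg0 x))
      (fun x => ?_) ((hf.add hg).div_const 2)
    have := two_mul_le_add_sq (f x) (g x)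
    nlinarith
  have key : ∀ s : Finset X, ∑ x ∈ s, f x * g x ≤ Real.sqrt (A * B) := by
    intro s
    have h1 : (∑ x ∈ s, f x * g x) ^ 2 ≤ (∑ x ∈ s, f x ^ 2) * (∑ x ∈ s, g x ^ 2) :=
      Finset.sum_mul_sq_le_sq_mul_sq s f g
    have h2 : (∑ x ∈ s, f x ^ 2) ≤ A := Summable.sum_le_tsum s (fun x _ => sq_nonneg _) hf
    have h3 : (∑ x ∈ s, g x ^ 2) ≤ B := Summable.sum_le_tsum s (fun x _ => sq_nonneg _) hg
    have hs0 : 0 ≤ ∑ x ∈ s, f x * g x :=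
      Finset.sum_nonneg fun x _ => mul_nonneg (hf0 x) (hg0 x)
    have : (∑ x ∈ s, f x * g x) ^ 2 ≤ A * B := by
      calc _ ≤ (∑ x ∈ s, f x ^ 2) * (∑ x ∈ s, g x ^ 2) := h1
        _ ≤ A * B :=
            mul_le_mul h2 h3 (Finset.sum_nonneg fun x _ => sq_nonneg _) hA
    nlinarith [Real.sq_sqrt (mul_nonneg hA hB), Real.sqrt_nonneg (A * B)]
  have := Summable.tsum_le_of_sum_le hfg key
  nlinarith [Real.sq_sqrt (mul_nonneg hA hB), Real.sqrt_nonneg (A * B),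
    tsum_nonneg (L := SummationFilter.unconditional X) (g := fun x => f x * g x) (fun x => mul_nonneg (hf0 x) (hg0 x))]

/-- Logarithmic curvature bound: for `k ≥ 1` and `μ_j := ∑_x λ_x^j e^{-λ_x}/j!` finite
for `j = k-1, k, k+1`, one has `k·μ_k² ≤ (k+1)·μ_{k-1}·μ_{k+1}`; equivalently, when all
three are positive, `2 ln μ_k - ln μ_{k-1} - ln μ_{k+1} ≤ ln((k+1)/k) ≤ 1/k`. -/
theorem log_curvature_bound
    (k : ℕ) (hk : 1 ≤ k) (X : Type*) [Countable X] (lam : X → ℝ) (hlam : ∀ x, 0 ≤ lam x)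
    (hsummable : ∀ j : ℕ, (j = k - 1 ∨ j = k ∨ j = k + 1) →
      Summable (fun x => lam x ^ j * Real.exp (-lam x) / j.factorial)) :
    (k : ℝ) * (∑' x, lam x ^ k * Real.exp (-lam x) / k.factorial) ^ 2
      ≤ ((k : ℝ) + 1) * (∑' x, lam x ^ (k - 1) * Real.exp (-lam x) / (k - 1).factorial)
        * (∑' x, lam x ^ (k + 1) * Real.exp (-lam x) / (k + 1).factorial)
    ∧ ((0 < ∑' x, lam x ^ (k - 1) * Real.exp (-lam x) / (k - 1).factorial) →
       (0 < ∑' x, lam x ^ k * Real.exp (-lam x) / k.factorial) →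
       (0 < ∑' x, lam x ^ (k + 1) * Real.exp (-lam x) / (k + 1).factorial) →
        2 * Real.log (∑' x, lam x ^ k * Real.exp (-lam x) / k.factorial)
          - Real.log (∑' x, lam x ^ (k - 1) * Real.exp (-lam x) / (k - 1).factorial)
          - Real.log (∑' x, lam x ^ (k + 1) * Real.exp (-lam x) / (k + 1).factorial)
        ≤ Real.log (((k : ℝ) + 1) / k) ∧ Real.log (((k : ℝ) + 1) / k) ≤ 1 / k) := by
  obtain ⟨m, rfl⟩ : ∃ m, k = m + 1 := ⟨k - 1, by omega⟩
  simp only [Nat.add_sub_cancel] at hsummable ⊢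
  push_cast
  have hk0 : (0:ℝ) < (m:ℝ) + 1 := by positivity
  set f : X → ℝ := fun x => Real.sqrt (lam x ^ m * Real.exp (-lam x) / m.factorial) with hfdef
  set g : X → ℝ := fun x => Real.sqrt (lam x ^ (m + 2) * Real.exp (-lam x) / (m + 2).factorial)
    with hgdef
  have hterm : ∀ (j : ℕ) (x : X), 0 ≤ lam x ^ j * Real.exp (-lam x) / j.factorial := by
    intro j x
    have := hlam x
    positivity
  have hf2 : ∀ x, f x ^ 2 = lam x ^ m * Real.exp (-lam x) / m.factorial := fun x =>
    Real.sq_sqrt (hterm _ x)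
  have hg2 : ∀ x, g x ^ 2 = lam x ^ (m + 2) * Real.exp (-lam x) / (m + 2).factorial := fun x =>
    Real.sq_sqrt (hterm _ x)
  have hm0 : (0:ℝ) < (m.factorial : ℝ) := by exact_mod_cast m.factorial_pos
  have hm2 : (0:ℝ) < ((m + 2).factorial : ℝ) := by exact_mod_cast (m + 2).factorial_pos
  have hm1 : (0:ℝ) < ((m + 1).factorial : ℝ) := by exact_mod_cast (m + 1).factorial_pos
  have hD : (0:ℝ) < (m.factorial : ℝ) * ((m + 2).factorial : ℝ) := mul_pos hm0 hm2
  set c : ℝ := Real.sqrt ((m.factorial : ℝ) * (m + 2).factorial) / (m + 1).factorial with hc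
  have hsD : (0:ℝ) < Real.sqrt ((m.factorial : ℝ) * (m + 2).factorial) := Real.sqrt_pos.mpr hD
  have hc0 : 0 < c := div_pos hsD hm1
  have hc2 : ((m:ℝ) + 1) * c ^ 2 = (m:ℝ) + 2 := by
    rw [hc, div_pow, Real.sq_sqrt hD.le]
    have e1 : ((m + 1).factorial : ℝ) = ((m:ℝ) + 1) * m.factorial := by
      rw [Nat.factorial_succ]; push_cast; ring
    have e2 : ((m + 2).factorial : ℝ) = ((m:ℝ) + 2) * ((m + 1).factorial : ℝ) := by
      rw [show m + 2 = (m + 1) + 1 by ring, Nat.factorial_succ]; push_cast; ring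
    rw [e2, e1]
    field_simp
  have hfg : ∀ x, lam x ^ (m + 1) * Real.exp (-lam x) / (m + 1).factorial = c * (f x * g x) := by
    intro x
    have hprod : f x * g x = (lam x ^ (m + 1) * Real.exp (-lam x))
        / Real.sqrt ((m.factorial : ℝ) * (m + 2).factorial) := by
      rw [hfdef, hgdef]
      rw [← Real.sqrt_mul (hterm m x)]
      rw [div_mul_div_comm]
      rw [show lam x ^ m * Real.exp (-lam x) * (lam x ^ (m + 2) * Real.exp (-lam x))
          = (lam x ^ (m + 1) * Real.exp (-lam x)) ^ 2 by ring]
      rw [Real.sqrt_div (sq_nonneg _), Real.sqrt_sq (by have := hlam x; positivity)]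
    rw [hprod, hc]
    field_simp
  have hsum_f : Summable (fun x => f x ^ 2) := by
    simpa only [hf2] using hsummable m (Or.inl rfl)
  have hsum_g : Summable (fun x => g x ^ 2) := by
    simpa only [hg2] using hsummable (m + 2) (Or.inr (Or.inr rfl))
  have hCS := tsum_cauchy_schwarz f g (fun x => Real.sqrt_nonneg _) (fun x => Real.sqrt_nonneg _)
    hsum_f hsum_g
  simp only [hf2, hg2] at hCS
  have hμk : (∑' x, lam x ^ (m + 1) * Real.exp (-lam x) / (m + 1).factorial)
      = c * ∑' x, f x * g x := by
    rw [← tsum_mul_left]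
    exact tsum_congr hfg
  set μa := ∑' x, lam x ^ m * Real.exp (-lam x) / m.factorial with hμa
  set μb := ∑' x, lam x ^ (m + 2) * Real.exp (-lam x) / (m + 2).factorial with hμb
  set μk := ∑' x, lam x ^ (m + 1) * Real.exp (-lam x) / (m + 1).factorial with hμkdef
  have part1 : ((m:ℝ) + 1) * μk ^ 2 ≤ ((m:ℝ) + 1 + 1) * μa * μb := by
    rw [hμk, mul_pow]
    have : ((m:ℝ) + 1) * (c ^ 2 * (∑' x, f x * g x) ^ 2) ≤ ((m:ℝ) + 2) * (μa * μb) := by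
      rw [← mul_assoc, hc2]
      exact mul_le_mul_of_nonneg_left hCS (by positivity)
    nlinarith
  refine ⟨part1, fun ha hb hbb => ?_⟩
  have hfrac : (0:ℝ) < ((m:ℝ) + 1 + 1) / ((m:ℝ) + 1) := by positivity
  constructor
  · have h2 : μk ^ 2 ≤ (((m:ℝ) + 1 + 1) / ((m:ℝ) + 1)) * (μa * μb) := by
      rw [div_mul_eq_mul_div, le_div_iff₀ hk0]
      nlinarith
    have hlog := Real.log_le_log (by positivity) h2
    rw [Real.log_pow, Real.log_mul (by positivity) (by positivity),
      Real.log_mul (ne_of_gt ha) (ne_of_gt hbb)] at hlog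
    push_cast at hlog ⊢
    linarith
  · have h1 : Real.log (((m:ℝ) + 1 + 1) / ((m:ℝ) + 1)) ≤ ((m:ℝ) + 1 + 1) / ((m:ℝ) + 1) - 1 :=
      Real.log_le_sub_one_of_pos hfrac
    have h2 : ((m:ℝ) + 1 + 1) / ((m:ℝ) + 1) - 1 = 1 / ((m:ℝ) + 1) := by
      field_simp
      ring
    rw [h2] at h1
    exact h1
end

section
/- Let X and K be finite index sets and let (Z_k^x)_{k∈K, x∈X} be random variables with values in [0,1] such that (i) the families (Z_k^x)_{k∈K}, indexed by x, are independent across x ∈ X, and (ii) E[Z_k^x Z_{k'}^x] = 0 for all x ∈ X and all k ≠ k'. Set Z_k^+ := ∑_{x∈X} Z_k^x. Then for all reals (α_k)_{k∈K}: Var[∑_{k∈K} α_k Z_k^+] ≤ ∑_{k∈K} α_k² E[Z_k^+]. -/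
open MeasureTheory ProbabilityTheory

/-- Double collection of (un)correlated random variables, part (a): if the `[0,1]`-valued
variables `Z_k^x` have families `(Z_k^x)_k` independent across `x` and satisfy
`E[Z_k^x Z_{k'}^x] = 0` for `k ≠ k'`, then with `Z_k^+ := ∑_x Z_k^x`,
`Var[∑_k α_k Z_k^+] ≤ ∑_k α_k² E[Z_k^+]`. -/
theorem variance_double_collection
    (Ω : Type*) [MeasurableSpace Ω] (μ : Measure Ω) [IsProbabilityMeasure μ]
    (X K : Type*) [Fintype X] [Fintype K]
    (Z : K → X → Ω → ℝ) (hmeas : ∀ k x, Measurable (Z k x))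
    (hrange : ∀ k x ω, Z k x ω ∈ Set.Icc (0 : ℝ) 1)
    (hindep : iIndepFun (β := fun _ : X => K → ℝ)
      (fun x ω k => Z k x ω) μ)
    (horth : ∀ x k k', k ≠ k' → ∫ ω, Z k x ω * Z k' x ω ∂μ = 0)
    (α : K → ℝ) :
    variance (fun ω => ∑ k, α k * ∑ x, Z k x ω) μ
      ≤ ∑ k, (α k) ^ 2 * ∫ ω, ∑ x, Z k x ω ∂μ := by
  classical
  set S : X → Ω → ℝ := fun x ω => ∑ k, α k * Z k x ω with hS
  -- integrability of products
  have hZint : ∀ k k' x, Integrable (fun ω => Z k x ω * Z k' x ω) μ := by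
    intro k k' x
    apply (integrable_const (1:ℝ)).mono' ((hmeas k x).mul (hmeas k' x)).aestronglyMeasurable
    filter_upwards with ω
    have h1 := hrange k x ω; have h2 := hrange k' x ω
    rw [Real.norm_eq_abs, Pi.mul_apply, abs_mul, abs_of_nonneg h1.1, abs_of_nonneg h2.1]
    exact mul_le_one₀ h1.2 h2.1 h2.2
  have hZint1 : ∀ k x, Integrable (Z k x) μ := by
    intro k x
    apply (integrable_const (1:ℝ)).mono' (hmeas k x).aestronglyMeasurable
    filter_upwards with ω
    rw [Real.norm_eq_abs, abs_of_nonneg (hrange k x ω).1]; exact (hrange k x ω).2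
  have hSmeas : ∀ x, Measurable (S x) := fun x =>
    Finset.measurable_sum _ fun k _ => (measurable_const.mul (hmeas k x))
  have hSmem : ∀ x, MemLp (S x) 2 μ := by
    intro x
    refine MemLp.of_bound (hSmeas x).aestronglyMeasurable (∑ k, |α k|) ?_
    filter_upwards with ω
    calc ‖S x ω‖ ≤ ∑ k, ‖α k * Z k x ω‖ := norm_sum_le _ _
    _ ≤ ∑ k, |α k| := by
        refine Finset.sum_le_sum fun k _ => ?_
        rw [Real.norm_eq_abs, abs_mul]
        have h := hrange k x ω
        nth_rewrite 2 [← mul_one |α k|]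
        exact mul_le_mul_of_nonneg_left (abs_le.2 ⟨by linarith [h.1], h.2⟩) (abs_nonneg _)
  -- independence of S x
  have hSindep : Set.Pairwise (Finset.univ : Finset X) (fun i j => IndepFun (S i) (S j) μ) := by
    have h := hindep.comp (fun _ f => ∑ k, α k * f k)
      (fun _ => Finset.measurable_sum _ fun k _ => measurable_const.mul (measurable_pi_apply k))
    intro i _ j _ hij
    exact h.indepFun hij
  -- rewrite the sum
  have hrw : (fun ω => ∑ k, α k * ∑ x, Z k x ω) = ∑ x, S x := by
    funext ω
    simp only [hS, Finset.sum_apply, Finset.mul_sum]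
    exact Finset.sum_comm
  rw [hrw, IndepFun.variance_sum (fun x _ => hSmem x) hSindep]
  -- pointwise bound on variance of each S x
  have key : ∀ x, variance (S x) μ ≤ ∑ k, (α k) ^ 2 * ∫ ω, Z k x ω ∂μ := by
    intro x
    have h1 : variance (S x) μ ≤ ∫ ω, (S x ω) ^ 2 ∂μ := by
      rw [variance_eq_sub (hSmem x)]
      simp only [Pi.pow_apply]
      exact sub_le_self _ (sq_nonneg _)
    refine h1.trans ?_
    have h2 : ∀ ω, (S x ω) ^ 2 = ∑ k, ∑ k', (α k * α k') * (Z k x ω * Z k' x ω) := by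
      intro ω
      rw [hS, sq, Finset.sum_mul_sum]
      congr 1; funext k; congr 1; funext k'; ring
    have h3 : ∫ ω, (S x ω)^2 ∂μ
        = ∑ k, ∑ k', (α k * α k') * ∫ ω, Z k x ω * Z k' x ω ∂μ := by
      simp only [h2]
      rw [integral_finset_sum _ (fun k _ => integrable_finset_sum _
        (fun k' _ => ((hZint k k' x).const_mul _)))]
      refine Finset.sum_congr rfl fun k _ => ?_
      rw [integral_finset_sum _ (fun k' _ => ((hZint k k' x).const_mul _))]
      exact Finset.sum_congr rfl fun k' _ => integral_const_mul _ _
    rw [h3]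
    have h4 : ∀ k : K, ∑ k', (α k * α k') * ∫ ω, Z k x ω * Z k' x ω ∂μ
        = (α k)^2 * ∫ ω, Z k x ω * Z k x ω ∂μ := by
      intro k
      rw [Finset.sum_eq_single k]
      · ring
      · intro k' _ hk'; rw [horth x k k' (Ne.symm hk'), mul_zero]
      · simp
    simp only [h4]
    refine Finset.sum_le_sum fun k _ => mul_le_mul_of_nonneg_left ?_ (sq_nonneg _)
    refine integral_mono (hZint k k x) (hZint1 k x) fun ω => ?_
    have h := hrange k x ω
    nlinarith [h.1, h.2]
  calc ∑ x, variance (S x) μ ≤ ∑ x, ∑ k, (α k)^2 * ∫ ω, Z k x ω ∂μ :=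
        Finset.sum_le_sum fun x _ => key x
    _ = ∑ k, (α k)^2 * ∫ ω, ∑ x, Z k x ω ∂μ := by
        rw [Finset.sum_comm]
        refine Finset.sum_congr rfl fun k _ => ?_
        rw [← Finset.mul_sum, integral_finset_sum _ fun x _ => hZint1 k x]
end

section
/- Let X and K be finite index sets and let (Z_k^x)_{k∈K, x∈X} be random variables with values in [0,1] such that Z_k^x Z_{k'}^x = 0 almost surely for all x ∈ X and all k ≠ k'. Set Z_k^+ := ∑_{x∈X} Z_k^x. Then for all reals (α_k)_{k∈K}: ∑_{x∈X} E[ |∑_{k∈K} α_k (Z_k^x − E[Z_k^x])|³ ] ≤ 8·∑_{k∈K} |α_k|³ E[Z_k^+]. -/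
open MeasureTheory

private lemma cube_add_le (a b : ℝ) (ha : 0 ≤ a) (hb : 0 ≤ b) :
    (a + b) ^ 3 ≤ 4 * a ^ 3 + 4 * b ^ 3 := by nlinarith [sq_nonneg (a - b), sq_nonneg (a + b), mul_nonneg ha hb]

/-- Double collection of random variables, part (b): if the `[0,1]`-valued variables
`Z_k^x` satisfy `Z_k^x Z_{k'}^x = 0` a.s. for `k ≠ k'`, then with `Z_k^+ := ∑_x Z_k^x`,
`∑_x E[|∑_k α_k (Z_k^x - E[Z_k^x])|³] ≤ 8 ∑_k |α_k|³ E[Z_k^+]`. -/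
theorem third_moment_double_collection
    (Ω : Type*) [MeasurableSpace Ω] (μ : Measure Ω) [IsProbabilityMeasure μ]
    (X K : Type*) [Fintype X] [Fintype K]
    (Z : K → X → Ω → ℝ) (hmeas : ∀ k x, Measurable (Z k x))
    (hrange : ∀ k x ω, Z k x ω ∈ Set.Icc (0 : ℝ) 1)
    (hprod : ∀ x k k', k ≠ k' → ∀ᵐ ω ∂μ, Z k x ω * Z k' x ω = 0)
    (α : K → ℝ) :
    ∑ x, ∫ ω, |∑ k, α k * (Z k x ω - ∫ ω', Z k x ω' ∂μ)| ^ 3 ∂μ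
      ≤ 8 * ∑ k, |α k| ^ 3 * ∫ ω, ∑ x, Z k x ω ∂μ := by
  -- integrability of each Z k x
  have hZint : ∀ k x, Integrable (Z k x) μ := by
    intro k x
    refine ⟨(hmeas k x).aestronglyMeasurable, HasFiniteIntegral.of_bounded (C := 1) ?_⟩
    filter_upwards with ω
    have h := hrange k x ω
    rw [Real.norm_eq_abs, abs_le]
    constructor <;> linarith [h.1, h.2]
  -- key bound for each x
  have key : ∀ x, ∫ ω, |∑ k, α k * (Z k x ω - ∫ ω', Z k x ω' ∂μ)| ^ 3 ∂μ
      ≤ 8 * ∑ k, |α k| ^ 3 * ∫ ω, Z k x ω ∂μ := by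
    intro x
    set S : Ω → ℝ := fun ω => ∑ k, α k * Z k x ω with hS
    set c : ℝ := ∑ k, α k * ∫ ω, Z k x ω ∂μ with hc
    have hSmeas : Measurable S := by
      apply Finset.measurable_sum
      intro k _
      exact (hmeas k x).const_mul _
    have hSbd : ∀ ω, |S ω| ≤ ∑ k, |α k| := by
      intro ω
      refine (Finset.abs_sum_le_sum_abs _ _).trans ?_
      apply Finset.sum_le_sum
      intro k _
      rw [abs_mul]
      have h := hrange k x ω
      have : |Z k x ω| ≤ 1 := by rw [abs_le]; constructor <;> linarith [h.1, h.2]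
      calc |α k| * |Z k x ω| ≤ |α k| * 1 := by
            exact mul_le_mul_of_nonneg_left this (abs_nonneg _)
        _ = |α k| := mul_one _
    have hSint : Integrable S μ := by
      refine ⟨hSmeas.aestronglyMeasurable, HasFiniteIntegral.of_bounded (C := ∑ k, |α k|) ?_⟩
      filter_upwards with ω using hSbd ω
    have hS3int : Integrable (fun ω => |S ω| ^ 3) μ := by
      refine ⟨((hSmeas.abs).pow_const 3).aestronglyMeasurable,
        HasFiniteIntegral.of_bounded (C := (∑ k, |α k|) ^ 3) ?_⟩
      filter_upwards with ω
      rw [Real.norm_eq_abs, abs_of_nonneg (by positivity)]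
      exact pow_le_pow_left₀ (abs_nonneg _) (hSbd ω) 3
    -- rewrite integrand as |S ω - c| ^ 3
    have hrw : ∀ ω, |∑ k, α k * (Z k x ω - ∫ ω', Z k x ω' ∂μ)| ^ 3 = |S ω - c| ^ 3 := by
      intro ω
      congr 2
      rw [hS, hc, ← Finset.sum_sub_distrib]
      exact Finset.sum_congr rfl fun k _ => by ring
    have hcS : c = ∫ ω, S ω ∂μ := by
      rw [hS, hc, integral_finset_sum]
      · exact Finset.sum_congr rfl fun k _ => (integral_const_mul _ _).symm
      · exact fun k _ => (hZint k x).const_mul _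
    -- step 1: ∫ |S - c|³ ≤ 8 ∫ |S|³
    have habs_int : Integrable (fun ω => |S ω|) μ := hSint.abs
    have jensen : |c| ^ 3 ≤ ∫ ω, |S ω| ^ 3 ∂μ := by
      have h1 : |c| ≤ ∫ ω, |S ω| ∂μ := by
        rw [hcS]
        have := norm_integral_le_integral_norm (μ := μ) S
        simpa [Real.norm_eq_abs] using this
      have h2 : (∫ ω, |S ω| ∂μ) ^ 3 ≤ ∫ ω, |S ω| ^ 3 ∂μ := by
        have := (convexOn_pow (𝕜 := ℝ) 3).map_integral_le
          (f := fun ω => |S ω|) (μ := μ)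
          (continuousOn_pow 3) isClosed_Ici
          (Filter.Eventually.of_forall fun ω => Set.mem_Ici.mpr (abs_nonneg _)) habs_int ?_
        · exact this
        · exact hS3int
      calc |c| ^ 3 ≤ (∫ ω, |S ω| ∂μ) ^ 3 :=
            pow_le_pow_left₀ (abs_nonneg _) h1 3
        _ ≤ _ := h2
    have step1 : ∫ ω, |S ω - c| ^ 3 ∂μ ≤ 8 * ∫ ω, |S ω| ^ 3 ∂μ := by
      have hb : ∀ ω, |S ω - c| ^ 3 ≤ 4 * |S ω| ^ 3 + 4 * |c| ^ 3 := by
        intro ω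
        calc |S ω - c| ^ 3 ≤ (|S ω| + |c|) ^ 3 := by
              exact pow_le_pow_left₀ (abs_nonneg _) (abs_sub _ _) 3
          _ ≤ 4 * |S ω| ^ 3 + 4 * |c| ^ 3 := cube_add_le _ _ (abs_nonneg _) (abs_nonneg _)
      calc ∫ ω, |S ω - c| ^ 3 ∂μ ≤ ∫ ω, (4 * |S ω| ^ 3 + 4 * |c| ^ 3) ∂μ := by
            apply integral_mono _ _ hb
            · refine ⟨(((hSmeas.sub_const c).abs).pow_const 3).aestronglyMeasurable,
                HasFiniteIntegral.of_bounded (C := (∑ k, |α k| + |c|) ^ 3) ?_⟩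
              filter_upwards with ω
              rw [Real.norm_eq_abs, abs_of_nonneg (by positivity)]
              refine pow_le_pow_left₀ (abs_nonneg _) ((abs_sub _ _).trans ?_) 3
              exact add_le_add_left (hSbd ω) _
            · exact (hS3int.const_mul 4).add (integrable_const _)
        _ = 4 * ∫ ω, |S ω| ^ 3 ∂μ + 4 * |c| ^ 3 := by
              rw [integral_add (hS3int.const_mul 4) (integrable_const _),
                integral_const_mul, integral_const]
              simp
        _ ≤ 4 * ∫ ω, |S ω| ^ 3 ∂μ + 4 * ∫ ω, |S ω| ^ 3 ∂μ := by linarith [jensen]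
        _ = 8 * ∫ ω, |S ω| ^ 3 ∂μ := by ring
    -- step 2: ∫ |S|³ ≤ ∑ k |α k|³ ∫ Z k x
    have hae : ∀ᵐ ω ∂μ, ∀ k k', k ≠ k' → Z k x ω * Z k' x ω = 0 := by
      rw [ae_all_iff]
      intro k
      rw [ae_all_iff]
      intro k'
      by_cases hkk : k = k'
      · exact Filter.Eventually.of_forall fun ω h => absurd hkk h
      · filter_upwards [hprod x k k' hkk] with ω h _ using h
    have step2 : ∫ ω, |S ω| ^ 3 ∂μ ≤ ∑ k, |α k| ^ 3 * ∫ ω, Z k x ω ∂μ := by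
      have hptw : ∀ᵐ ω ∂μ, |S ω| ^ 3 ≤ ∑ k, |α k| ^ 3 * Z k x ω := by
        filter_upwards [hae] with ω hω
        by_cases hz : ∀ k, Z k x ω = 0
        · simp only [hS]
          simp only [hz, mul_zero, Finset.sum_const_zero, abs_zero]
          rw [zero_pow (by norm_num)]
        · push_neg at hz
          obtain ⟨k0, hk0⟩ := hz
          have hothers : ∀ k, k ≠ k0 → Z k x ω = 0 := by
            intro k hk
            have := hω k k0 hk
            rcases mul_eq_zero.mp this with h | h
            · exact h
            · exact absurd h hk0
          have hSeq : S ω = α k0 * Z k0 x ω := by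
            rw [hS]
            exact Finset.sum_eq_single k0
              (fun k _ hk => by rw [hothers k hk, mul_zero])
              (fun h => absurd (Finset.mem_univ k0) h)
          have hz0 := hrange k0 x ω
          have hcube : Z k0 x ω ^ 3 ≤ Z k0 x ω := by nlinarith [hz0.1, hz0.2, mul_nonneg hz0.1 hz0.1, sq_nonneg (Z k0 x ω)]
          calc |S ω| ^ 3 = |α k0| ^ 3 * Z k0 x ω ^ 3 := by
                rw [hSeq, abs_mul, mul_pow, abs_of_nonneg hz0.1]
            _ ≤ |α k0| ^ 3 * Z k0 x ω := by
                exact mul_le_mul_of_nonneg_left hcube (by positivity)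
            _ ≤ ∑ k, |α k| ^ 3 * Z k x ω := by
                refine Finset.single_le_sum (f := fun k => |α k| ^ 3 * Z k x ω) (fun k _ => ?_) (Finset.mem_univ k0)
                exact mul_nonneg (by positivity) (hrange k x ω).1
      have hint2 : Integrable (fun ω => ∑ k, |α k| ^ 3 * Z k x ω) μ :=
        integrable_finset_sum _ fun k _ => (hZint k x).const_mul _
      calc ∫ ω, |S ω| ^ 3 ∂μ ≤ ∫ ω, ∑ k, |α k| ^ 3 * Z k x ω ∂μ :=
            integral_mono_ae hS3int hint2 hptw
        _ = ∑ k, |α k| ^ 3 * ∫ ω, Z k x ω ∂μ := by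
            rw [integral_finset_sum _ fun k _ => (hZint k x).const_mul _]
            exact Finset.sum_congr rfl fun k _ => integral_const_mul _ _
    calc ∫ ω, |∑ k, α k * (Z k x ω - ∫ ω', Z k x ω' ∂μ)| ^ 3 ∂μ
        = ∫ ω, |S ω - c| ^ 3 ∂μ := by
          exact integral_congr_ae (Filter.Eventually.of_forall hrw)
      _ ≤ 8 * ∫ ω, |S ω| ^ 3 ∂μ := step1
      _ ≤ 8 * ∑ k, |α k| ^ 3 * ∫ ω, Z k x ω ∂μ := by linarith [step2]
  -- sum over x
  calc ∑ x, ∫ ω, |∑ k, α k * (Z k x ω - ∫ ω', Z k x ω' ∂μ)| ^ 3 ∂μ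
      ≤ ∑ x, 8 * ∑ k, |α k| ^ 3 * ∫ ω, Z k x ω ∂μ := Finset.sum_le_sum fun x _ => key x
    _ = 8 * ∑ k, |α k| ^ 3 * ∫ ω, ∑ x, Z k x ω ∂μ := by
        rw [← Finset.mul_sum, Finset.sum_comm]
        congr 1
        refine Finset.sum_congr rfl fun k _ => ?_
        rw [← Finset.mul_sum, integral_finset_sum _ fun x _ => hZint k x]
end

section
/- Let X be a countable index set, n > 0 a real number, (λ_x)_{x∈X} nonnegative reals with ∑_x λ_x = n, and (N_x)_{x∈X} independent random variables with N_x ~ Poisson(λ_x). For k ≥ 1 let M_k := #{x : N_x = k}, and for reals (α_k)_{k≥1} define T := ∑_{k≥1} α_k M_k and T_x := ∑_{k≥1} α_k 1{N_x = k}. Let c > 0. Then: (i) if α_k ≤ c·k for all k ≥ 1, then E[T] ≤ c·n; (ii) if α_k² ≤ c·k for all k ≥ 1, then Var[T] ≤ c·n; (iii) if |α_k|³ ≤ c·k for all k ≥ 1, then ∑_{x∈X} E[|T_x − E[T_x]|³] ≤ 8c·n. -/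
open MeasureTheory
open scoped ENNReal
open scoped ProbabilityTheory

namespace MomentAux

lemma poisson_hasSum (l : ℝ) :
    HasSum (fun k : ℕ => l ^ k * Real.exp (-l) / k.factorial) 1 := by
  have h : HasSum (fun k : ℕ => l ^ k / k.factorial) (Real.exp l) := by
    rw [Real.exp_eq_exp_ℝ]
    exact NormedSpace.expSeries_div_hasSum_exp l
  have h2 := h.mul_right (Real.exp (-l))
  rw [← Real.exp_add] at h2
  simp only [add_neg_cancel, Real.exp_zero] at h2
  have heq : (fun k : ℕ => l ^ k * Real.exp (-l) / k.factorial)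
      = fun k : ℕ => l ^ k / k.factorial * Real.exp (-l) := by
    funext k; ring
  rw [heq]; exact h2

lemma poisson_mean_hasSum (l : ℝ) :
    HasSum (fun k : ℕ => (k : ℝ) * (l ^ k * Real.exp (-l) / k.factorial)) l := by
  have h1 := (poisson_hasSum l).mul_left l
  rw [mul_one] at h1
  have h2 : HasSum (fun k : ℕ =>
      (((k : ℕ) + 1 : ℕ) : ℝ) * (l ^ ((k : ℕ) + 1) * Real.exp (-l) / ((k : ℕ) + 1).factorial)) l := by
    have heq : (fun k : ℕ =>
        (((k : ℕ) + 1 : ℕ) : ℝ) * (l ^ ((k : ℕ) + 1) * Real.exp (-l) / ((k : ℕ) + 1).factorial))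
        = fun k : ℕ => l * (l ^ k * Real.exp (-l) / k.factorial) := by
      funext k
      have hk : (k.factorial : ℝ) ≠ 0 := Nat.cast_ne_zero.2 k.factorial_ne_zero
      have hk1 : ((k : ℝ) + 1) ≠ 0 := by positivity
      rw [Nat.factorial_succ]
      push_cast
      field_simp
      ring
    rw [heq]; exact h1
  have h3 := (hasSum_nat_add_iff (f := fun k : ℕ => (k : ℝ) * (l ^ k * Real.exp (-l) / k.factorial)) 1).mp h2
  simpa using h3

lemma ofReal_max_zero (a : ℝ) : ENNReal.ofReal (max a 0) = ENNReal.ofReal a := by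
  rcases le_total a 0 with h | h
  · simp [max_eq_right h, ENNReal.ofReal_of_nonpos h]
  · simp [max_eq_left h]

lemma ofReal_tsum_le {ι : Type*} (f : ι → ℝ) :
    ENNReal.ofReal (∑' i, f i) ≤ ∑' i, ENNReal.ofReal (f i) := by
  by_cases hf : Summable f
  · have hmax : Summable (fun i => max (f i) 0) :=
      hf.abs.of_nonneg_of_le (fun i => le_max_right _ _)
        (fun i => max_le (le_abs_self _) (abs_nonneg _))
    calc ENNReal.ofReal (∑' i, f i) ≤ ENNReal.ofReal (∑' i, max (f i) 0) :=
          ENNReal.ofReal_le_ofReal (Summable.tsum_le_tsum (fun i => le_max_left _ _) hf hmax)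
      _ = ∑' i, ENNReal.ofReal (max (f i) 0) :=
          ENNReal.ofReal_tsum_of_nonneg (fun i => le_max_right _ _) hmax
      _ = ∑' i, ENNReal.ofReal (f i) := by simp [ofReal_max_zero]
  · simp [tsum_eq_zero_of_not_summable hf]

lemma le_of_sq_le_sq {a b : ℝ≥0∞} (h : a ^ 2 ≤ b ^ 2) : a ≤ b := by
  have h2 := ENNReal.rpow_le_rpow (x := a ^ 2) (y := b ^ 2) h (by norm_num : (0:ℝ) ≤ 1/2)
  rw [← ENNReal.rpow_natCast a 2, ← ENNReal.rpow_natCast b 2, ← ENNReal.rpow_mul,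
    ← ENNReal.rpow_mul] at h2
  norm_num at h2
  exact h2

lemma coe_nnnorm_sq (t : ℝ) : ((‖t‖₊ : ℝ≥0∞)) ^ 2 = ENNReal.ofReal (t ^ 2) := by
  rw [show ((‖t‖₊ : ℝ≥0∞)) = ‖t‖ₑ from rfl, ← ofReal_norm_eq_enorm, ← ENNReal.ofReal_pow (norm_nonneg t)]
  simp [Real.norm_eq_abs, sq_abs]

lemma sq_eLpNorm_two {Ω : Type*} [MeasurableSpace Ω] (μ : Measure Ω) (h : Ω → ℝ) :
    (eLpNorm h 2 μ) ^ 2 = ∫⁻ ω, ((‖h ω‖₊ : ℝ≥0∞)) ^ 2 ∂μ := by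
  rw [eLpNorm_eq_lintegral_rpow_enorm_toReal two_ne_zero ENNReal.ofNat_ne_top]
  rw [← ENNReal.rpow_natCast _ 2, ← ENNReal.rpow_mul]
  norm_num
  rfl

lemma cube_bound (s t : ℝ) (hs : 0 ≤ s) (ht : 0 ≤ t) :
    (s + t) ^ 3 ≤ 4 * s ^ 3 + 4 * t ^ 3 := by
  nlinarith [mul_nonneg (sq_nonneg (s - t)) (add_nonneg hs ht), mul_nonneg hs ht,
    sq_nonneg (s - t), sq_nonneg (s + t)]

lemma lintegral_pow_three_le {Ω : Type*} [MeasurableSpace Ω] (μ : Measure Ω)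
    [IsProbabilityMeasure μ] (f : Ω → ℝ≥0∞) (hf : AEMeasurable f μ) :
    (∫⁻ ω, f ω ∂μ) ^ 3 ≤ ∫⁻ ω, (f ω) ^ 3 ∂μ := by
  have hpq : Real.HolderConjugate 3 (3/2) := ⟨by norm_num, by norm_num, by norm_num⟩
  have h := ENNReal.lintegral_mul_le_Lp_mul_Lq μ hpq hf (aemeasurable_const (b := (1:ℝ≥0∞)))
  simp only [Pi.mul_apply, mul_one, ENNReal.one_rpow, lintegral_one, measure_univ,
    ENNReal.one_rpow, mul_one] at h
  have h3 : (∫⁻ ω, f ω ∂μ) ^ 3 ≤ ((∫⁻ ω, f ω ^ (3:ℝ) ∂μ) ^ (1/(3:ℝ))) ^ 3 :=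
    pow_le_pow_left' h 3
  calc (∫⁻ ω, f ω ∂μ) ^ 3 ≤ ((∫⁻ ω, f ω ^ (3:ℝ) ∂μ) ^ (1/(3:ℝ))) ^ 3 := h3
    _ = ∫⁻ ω, f ω ^ (3:ℝ) ∂μ := by
        rw [← ENNReal.rpow_natCast _ 3, ← ENNReal.rpow_mul]
        norm_num
    _ = ∫⁻ ω, (f ω) ^ 3 ∂μ := by
        congr 1; funext ω; rw [← ENNReal.rpow_natCast _ 3]; norm_num

end MomentAux

/-- Upper bounds on moments of linear test statistics `T = ∑_{k≥1} α_k M_k = ∑_x T_x`,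
`T_x = ∑_{k≥1} α_k 1{N_x = k}`, for independent Poisson(`λ_x`) counts `N_x` with
`∑_x λ_x = n`: (i) if `α_k ≤ c·k` then `E[T] ≤ c·n`; (ii) if `α_k² ≤ c·k` then
`Var[T] ≤ c·n`; (iii) if `|α_k|³ ≤ c·k` then `∑_x E[|T_x - E[T_x]|³] ≤ 8c·n`. -/
theorem moment_bounds_linear_tests
    (Ω : Type*) [MeasurableSpace Ω] (μ : Measure Ω) [IsProbabilityMeasure μ]
    (X : Type*) [Countable X]
    (n : ℝ) (hn : 0 < n) (lam : X → ℝ) (hlam : ∀ x, 0 ≤ lam x) (hsum : HasSum lam n)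
    (N : X → Ω → ℕ) (hmeas : ∀ x, Measurable (N x))
    (hindep : ProbabilityTheory.iIndepFun N μ)
    (hdist : ∀ x k, μ {ω | N x ω = k}
      = ENNReal.ofReal (lam x ^ k * Real.exp (-lam x) / k.factorial))
    (α : ℕ → ℝ) (c : ℝ) (hc : 0 < c)
    (Tx : X → Ω → ℝ) (hTx : ∀ x ω, Tx x ω = if 1 ≤ N x ω then α (N x ω) else 0)
    (T : Ω → ℝ) (hT : ∀ ω, T ω = ∑' x, Tx x ω) :
    ((∀ k : ℕ, 1 ≤ k → α k ≤ c * k) → Integrable T μ → ∫ ω, T ω ∂μ ≤ c * n)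
    ∧ ((∀ k : ℕ, 1 ≤ k → (α k) ^ 2 ≤ c * k) → MemLp T 2 μ →
        ProbabilityTheory.variance T μ ≤ c * n)
    ∧ ((∀ k : ℕ, 1 ≤ k → |α k| ^ 3 ≤ c * k) →
        ∑' x, ∫⁻ ω, ENNReal.ofReal (|Tx x ω - ∫ ω', Tx x ω' ∂μ| ^ 3) ∂μ
          ≤ ENNReal.ofReal (8 * c * n)) := by
  classical
  set β : ℕ → ℝ := fun k => if 1 ≤ k then α k else 0 with hβdef
  have hβ : ∀ x ω, Tx x ω = β (N x ω) := fun x ω => hTx x ω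
  set p : X → ℕ → ℝ := fun x k => lam x ^ k * Real.exp (-lam x) / k.factorial with hpdef
  have hpnn : ∀ x k, 0 ≤ p x k := fun x k => by
    simp only [hpdef]
    exact div_nonneg (mul_nonneg (pow_nonneg (hlam x) k) (Real.exp_nonneg _)) (Nat.cast_nonneg _)
  have hpm : ∀ x, HasSum (fun k : ℕ => (k : ℝ) * p x k) (lam x) :=
    fun x => MomentAux.poisson_mean_hasSum (lam x)
  have hTxmeas : ∀ x, Measurable (Tx x) := by
    intro x
    have h : Tx x = β ∘ N x := funext (hβ x)
    rw [h]
    exact (measurable_of_countable β).comp (hmeas x)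
  have key : ∀ (x : X) (g : ℕ → ℝ≥0∞),
      ∫⁻ ω, g (N x ω) ∂μ = ∑' k, g k * ENNReal.ofReal (p x k) := by
    intro x g
    rw [← lintegral_map (measurable_of_countable g) (hmeas x), lintegral_countable']
    apply tsum_congr; intro k
    rw [Measure.map_apply (hmeas x) (measurableSet_singleton k)]
    have h : N x ⁻¹' {k} = {ω | N x ω = k} := by ext ω; simp
    rw [h, hdist x k]
  have momle : ∀ (d : ℝ), 0 ≤ d → ∀ (x : X) (g : ℕ → ℝ≥0∞),
      (∀ k, g k ≤ ENNReal.ofReal (d * k)) →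
      ∫⁻ ω, g (N x ω) ∂μ ≤ ENNReal.ofReal (d * lam x) := by
    intro d hd x g hg
    rw [key x g]
    calc ∑' k, g k * ENNReal.ofReal (p x k)
        ≤ ∑' k : ℕ, ENNReal.ofReal (d * (k : ℝ)) * ENNReal.ofReal (p x k) :=
          ENNReal.tsum_le_tsum (fun k => mul_le_mul_left (hg k) _)
      _ = ∑' k : ℕ, ENNReal.ofReal (d * ((k : ℝ) * p x k)) := by
          apply tsum_congr; intro k
          rw [← ENNReal.ofReal_mul (mul_nonneg hd (Nat.cast_nonneg k)), mul_assoc]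
      _ = ENNReal.ofReal (∑' k : ℕ, d * ((k : ℝ) * p x k)) :=
          (ENNReal.ofReal_tsum_of_nonneg
            (fun k => mul_nonneg hd (mul_nonneg (Nat.cast_nonneg k) (hpnn x k)))
            (((hpm x).summable).mul_left d)).symm
      _ = ENNReal.ofReal (d * lam x) := by rw [((hpm x).mul_left d).tsum_eq]
  have habs : ∀ (d : ℝ), 0 ≤ d → (∀ k, |β k| ≤ d * k) → ∀ x,
      ∫⁻ ω, ENNReal.ofReal |Tx x ω| ∂μ ≤ ENNReal.ofReal (d * lam x) := by
    intro d hd hb x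
    have h : ∀ ω, ENNReal.ofReal |Tx x ω| = (fun k => ENNReal.ofReal |β k|) (N x ω) :=
      fun ω => by rw [hβ]
    rw [lintegral_congr h]
    exact momle d hd x _ (fun k => ENNReal.ofReal_le_ofReal (hb k))
  have hInt : ∀ (d : ℝ), 0 ≤ d → (∀ k, |β k| ≤ d * k) → ∀ x, Integrable (Tx x) μ := by
    intro d hd hb x
    refine ⟨(hTxmeas x).aestronglyMeasurable, ?_⟩
    rw [hasFiniteIntegral_iff_norm]
    simp only [Real.norm_eq_abs]
    exact lt_of_le_of_lt (habs d hd hb x) ENNReal.ofReal_lt_top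
  have habsint : ∀ (d : ℝ), 0 ≤ d → (∀ k, |β k| ≤ d * k) → ∀ x,
      |∫ ω, Tx x ω ∂μ| ≤ d * lam x := by
    intro d hd hb x
    have h1 : |∫ ω, Tx x ω ∂μ| ≤ ∫ ω, |Tx x ω| ∂μ := by
      simpa [Real.norm_eq_abs] using norm_integral_le_integral_norm (μ := μ) (Tx x)
    refine h1.trans ?_
    have h2 : ENNReal.ofReal (∫ ω, |Tx x ω| ∂μ) ≤ ENNReal.ofReal (d * lam x) := by
      rw [ofReal_integral_eq_lintegral_ofReal ((hInt d hd hb x).abs)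
        (Filter.Eventually.of_forall fun ω => abs_nonneg _)]
      exact habs d hd hb x
    rwa [ENNReal.ofReal_le_ofReal_iff (mul_nonneg hd (hlam x))] at h2
  have hsum_ofReal : ∀ (d : ℝ), 0 ≤ d →
      ∑' x, ENNReal.ofReal (d * lam x) = ENNReal.ofReal (d * n) := by
    intro d hd
    rw [← ENNReal.ofReal_tsum_of_nonneg (fun x => mul_nonneg hd (hlam x))
      (hsum.summable.mul_left d), ((hsum.mul_left d).tsum_eq)]
  refine ⟨?_, ?_, ?_⟩
  · -- Part (i)
    intro hα hIntT
    have hβle : ∀ k : ℕ, β k ≤ c * k := by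
      intro k
      cases k with
      | zero => simp [hβdef]
      | succ m => simpa [hβdef] using hα (m+1) (Nat.succ_le_succ (Nat.zero_le m))
    have hlb : ∫⁻ ω, ENNReal.ofReal (T ω) ∂μ ≤ ENNReal.ofReal (c * n) := by
      have hptw : ∀ ω, ENNReal.ofReal (T ω) ≤ ∑' x, ENNReal.ofReal (Tx x ω) := by
        intro ω; rw [hT ω]; exact MomentAux.ofReal_tsum_le _
      calc ∫⁻ ω, ENNReal.ofReal (T ω) ∂μ
          ≤ ∫⁻ ω, ∑' x, ENNReal.ofReal (Tx x ω) ∂μ := lintegral_mono hptw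
        _ = ∑' x, ∫⁻ ω, ENNReal.ofReal (Tx x ω) ∂μ :=
            lintegral_tsum (fun x => ((hTxmeas x).ennreal_ofReal).aemeasurable)
        _ ≤ ∑' x, ENNReal.ofReal (c * lam x) := by
            refine ENNReal.tsum_le_tsum (fun x => ?_)
            have h : ∀ ω, ENNReal.ofReal (Tx x ω) = (fun k => ENNReal.ofReal (β k)) (N x ω) :=
              fun ω => by rw [hβ]
            rw [lintegral_congr h]
            exact momle c hc.le x _ (fun k => ENNReal.ofReal_le_ofReal (hβle k))
        _ = ENNReal.ofReal (c * n) := hsum_ofReal c hc.le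
    rw [integral_eq_lintegral_pos_part_sub_lintegral_neg_part hIntT]
    have h1 : (∫⁻ ω, ENNReal.ofReal (T ω) ∂μ).toReal ≤ c * n :=
      ENNReal.toReal_le_of_le_ofReal (by positivity) hlb
    have h2 : 0 ≤ (∫⁻ ω, ENNReal.ofReal (-T ω) ∂μ).toReal := ENNReal.toReal_nonneg
    linarith
  · -- Part (ii)
    intro hα2 hT2
    have hb2 : ∀ k : ℕ, (β k) ^ 2 ≤ c * k := by
      intro k
      cases k with
      | zero => simp [hβdef]
      | succ m => simpa [hβdef] using hα2 (m+1) (Nat.succ_le_succ (Nat.zero_le m))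
    have hb1 : ∀ k : ℕ, |β k| ≤ (1 + c) * k := by
      intro k
      cases k with
      | zero => simp [hβdef]
      | succ m =>
        have h := hb2 (m+1)
        have ha0 : (0:ℝ) ≤ |β (m+1)| := abs_nonneg _
        have hsq : |β (m+1)| ^ 2 = (β (m+1)) ^ 2 := sq_abs _
        push_cast at h ⊢
        rcases le_total (|β (m+1)|) 1 with h1 | h1
        · nlinarith [Nat.cast_nonneg (α := ℝ) m]
        · nlinarith [Nat.cast_nonneg (α := ℝ) m,
            mul_nonneg ha0 (by linarith : (0:ℝ) ≤ |β (m+1)| - 1)]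
    have h1c : (0:ℝ) ≤ 1 + c := by positivity
    have hIntx : ∀ x, Integrable (Tx x) μ := hInt (1+c) h1c hb1
    have hintx : ∀ x, |∫ ω, Tx x ω ∂μ| ≤ (1+c) * lam x := habsint (1+c) h1c hb1
    have hTint : Integrable T μ := hT2.integrable one_le_two
    have hsq_le : ∀ x, ∫⁻ ω, ((‖Tx x ω‖₊ : ℝ≥0∞)) ^ 2 ∂μ ≤ ENNReal.ofReal (c * lam x) := by
      intro x
      have h : ∀ ω, ((‖Tx x ω‖₊ : ℝ≥0∞)) ^ 2
          = (fun k => ENNReal.ofReal ((β k) ^ 2)) (N x ω) := by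
        intro ω; rw [MomentAux.coe_nnnorm_sq, hβ]
      rw [lintegral_congr h]
      exact momle c hc.le x _ (fun k => ENNReal.ofReal_le_ofReal (hb2 k))
    have hMemx : ∀ x, MemLp (Tx x) 2 μ := by
      intro x
      refine ⟨(hTxmeas x).aestronglyMeasurable, ?_⟩
      have hlt : (eLpNorm (Tx x) 2 μ) ^ 2 < ∞ := by
        rw [MomentAux.sq_eLpNorm_two]
        exact lt_of_le_of_lt (hsq_le x) ENNReal.ofReal_lt_top
      rcases eq_top_or_lt_top (eLpNorm (Tx x) 2 μ) with h | h
      · rw [h, ENNReal.top_pow (by norm_num : (2:ℕ) ≠ 0)] at hlt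
        exact absurd hlt (lt_irrefl _)
      · exact h
    have hvarx : ∀ x, ProbabilityTheory.variance (Tx x) μ ≤ c * lam x := by
      intro x
      refine (ProbabilityTheory.variance_le_expectation_sq
        (hTxmeas x).aestronglyMeasurable).trans ?_
      have hint2 : Integrable (fun ω => Tx x ω ^ 2) μ :=
        (memLp_two_iff_integrable_sq (hTxmeas x).aestronglyMeasurable).mp (hMemx x)
      have h1 : ENNReal.ofReal (∫ ω, Tx x ω ^ 2 ∂μ) ≤ ENNReal.ofReal (c * lam x) := by
        rw [ofReal_integral_eq_lintegral_ofReal hint2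
          (Filter.Eventually.of_forall fun ω => sq_nonneg _)]
        have h : ∀ ω, ENNReal.ofReal (Tx x ω ^ 2) = ((‖Tx x ω‖₊ : ℝ≥0∞)) ^ 2 := fun ω =>
          (MomentAux.coe_nnnorm_sq _).symm
        rw [lintegral_congr h]
        exact hsq_le x
      have h2 : ∫ ω, Tx x ω ^ 2 ∂μ ≤ c * lam x := by
        rwa [ENNReal.ofReal_le_ofReal_iff (mul_nonneg hc.le (hlam x))] at h1
      have h3 : μ[(Tx x) ^ 2] = ∫ ω, Tx x ω ^ 2 ∂μ := by
        apply integral_congr_ae; filter_upwards with ω; simp [Pi.pow_apply]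
      rw [h3]; exact h2
    have hindepTx : ProbabilityTheory.iIndepFun Tx μ := by
      have h := hindep.comp (fun _ => β) (fun _ => measurable_of_countable β)
      have he : (fun x => β ∘ N x) = Tx := by
        funext x ω; exact (hβ x ω).symm
      rwa [he] at h
    have hMemS : ∀ G : Finset X, MemLp (fun ω => ∑ x ∈ G, Tx x ω) 2 μ := by
      intro G
      have h := memLp_finset_sum' (μ := μ) (p := 2) G (fun i (_ : i ∈ G) => hMemx i)
      have he : (∑ i ∈ G, Tx i) = fun ω => ∑ x ∈ G, Tx x ω := by funext ω; simp
      rwa [he] at h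
    have hvarsum : ∀ G : Finset X, ProbabilityTheory.variance (fun ω => ∑ x ∈ G, Tx x ω) μ
        ≤ c * ∑ x ∈ G, lam x := by
      intro G
      have hmem : ∀ i ∈ G, MemLp (Tx i) 2 μ := fun i _ => hMemx i
      have hpair : Set.Pairwise ↑G fun i j => ProbabilityTheory.IndepFun (Tx i) (Tx j) μ :=
        fun i _ j _ hij => hindepTx.indepFun hij
      have h := ProbabilityTheory.IndepFun.variance_sum hmem hpair
      have he : (∑ i ∈ G, Tx i) = fun ω => ∑ x ∈ G, Tx x ω := by funext ω; simp
      rw [he] at h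
      rw [h, Finset.mul_sum]
      exact Finset.sum_le_sum (fun i _ => hvarx i)
    have hsummae : ∀ᵐ ω ∂μ, Summable (fun x => Tx x ω) := by
      have hmeastsum : Measurable (fun ω => ∑' x, ENNReal.ofReal |Tx x ω|) :=
        Measurable.ennreal_tsum (fun x => (hTxmeas x).abs.ennreal_ofReal)
      have hfin : ∫⁻ ω, ∑' x, ENNReal.ofReal |Tx x ω| ∂μ < ∞ := by
        rw [lintegral_tsum (fun x => ((hTxmeas x).abs.ennreal_ofReal).aemeasurable)]
        calc ∑' x, ∫⁻ ω, ENNReal.ofReal |Tx x ω| ∂μ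
            ≤ ∑' x, ENNReal.ofReal ((1+c) * lam x) :=
              ENNReal.tsum_le_tsum (habs (1+c) h1c hb1)
          _ = ENNReal.ofReal ((1+c) * n) := hsum_ofReal (1+c) h1c
          _ < ∞ := ENNReal.ofReal_lt_top
      filter_upwards [ae_lt_top hmeastsum hfin.ne] with ω hω
      have h1 : ∀ x, ENNReal.ofReal |Tx x ω| = ((‖Tx x ω‖₊ : ℝ≥0∞)) := fun x => by
        rw [show ((‖Tx x ω‖₊ : ℝ≥0∞)) = ‖Tx x ω‖ₑ from rfl, ← ofReal_norm_eq_enorm, Real.norm_eq_abs]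
      rw [tsum_congr h1] at hω
      exact Summable.of_nnnorm (ENNReal.tsum_coe_ne_top_iff_summable.mp hω.ne)
    obtain ⟨ι, hι⟩ := exists_injective_nat X
    set e : ℕ → Finset X := fun m => (Finset.range m).preimage ι (hι.injOn) with he_def
    have hemono : Monotone e := by
      intro a b hab y hy
      simp only [he_def, Finset.mem_preimage, Finset.mem_range] at *
      omega
    have hecov : ∀ x, ∃ m, x ∈ e m := fun x => ⟨ι x + 1, by
      simp only [he_def, Finset.mem_preimage, Finset.mem_range]; omega⟩
    have hetend : Filter.Tendsto e Filter.atTop Filter.atTop :=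
      Filter.tendsto_atTop_finset_of_monotone hemono hecov
    set τ : ℕ → ℝ := fun m => n - ∑ x ∈ e m, lam x with hτ_def
    have hs_le : ∀ (G : Finset X), ∑ x ∈ G, lam x ≤ n := fun G =>
      sum_le_hasSum G (fun x _ => hlam x) hsum
    have hτnn : ∀ m, 0 ≤ τ m := fun m => sub_nonneg.2 (hs_le (e m))
    have hτ0 : Filter.Tendsto τ Filter.atTop (nhds 0) := by
      have h1 : Filter.Tendsto (fun m => ∑ x ∈ e m, lam x) Filter.atTop (nhds n) :=
        (hsum : Filter.Tendsto _ _ _).comp hetend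
      simpa using (tendsto_const_nhds (x := n)).sub h1
    have hGtail : ∀ m (G : Finset X), Disjoint G (e m) → ∑ x ∈ G, lam x ≤ τ m := by
      intro m G hdisj
      have h1 : ∑ x ∈ G ∪ e m, lam x ≤ n := hs_le _
      rw [Finset.sum_union hdisj] at h1
      simp only [hτ_def]; linarith
    have hτkey : ∀ m, ProbabilityTheory.variance T μ ≤
        (Real.sqrt (c * n) + 2 * Real.sqrt (c * τ m + ((1+c) * τ m)^2))^2 := by
      intro m
      set Sm : Ω → ℝ := fun ω => ∑ x ∈ e m, Tx x ω with hSm_def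
      have hSmMem : MemLp Sm 2 μ := hMemS (e m)
      have hSmInt : Integrable Sm μ := integrable_finset_sum _ (fun i _ => hIntx i)
      set Rm : Ω → ℝ := fun ω => T ω - Sm ω with hRm_def
      have hRmMem : MemLp Rm 2 μ := hT2.sub hSmMem
      have hRmInt : Integrable Rm μ := hTint.sub hSmInt
      have hexprnn : 0 ≤ c * τ m + ((1+c) * τ m)^2 :=
        add_nonneg (mul_nonneg hc.le (hτnn m)) (sq_nonneg _)
      have hG : ∀ G : Finset X, Disjoint G (e m) →
          ∫⁻ ω, ENNReal.ofReal ((∑ x ∈ G, Tx x ω)^2) ∂μ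
            ≤ ENNReal.ofReal (c * τ m + ((1+c) * τ m)^2) := by
        intro G hdisj
        have hlamG : ∑ x ∈ G, lam x ≤ τ m := hGtail m G hdisj
        have hlamG0 : 0 ≤ ∑ x ∈ G, lam x := Finset.sum_nonneg (fun x _ => hlam x)
        have hSG : MemLp (fun ω => ∑ x ∈ G, Tx x ω) 2 μ := hMemS G
        have hint2 : Integrable (fun ω => (∑ x ∈ G, Tx x ω)^2) μ :=
          (memLp_two_iff_integrable_sq hSG.aestronglyMeasurable).mp hSG
        rw [← ofReal_integral_eq_lintegral_ofReal hint2
          (Filter.Eventually.of_forall fun ω => sq_nonneg _)]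
        apply ENNReal.ofReal_le_ofReal
        have hvd : ProbabilityTheory.variance (fun ω => ∑ x ∈ G, Tx x ω) μ
            = (∫ ω, (∑ x ∈ G, Tx x ω)^2 ∂μ) - (∫ ω, ∑ x ∈ G, Tx x ω ∂μ)^2 := by
          have h := ProbabilityTheory.variance_eq_sub hSG
          have h2 : μ[(fun ω => ∑ x ∈ G, Tx x ω) ^ 2] = ∫ ω, (∑ x ∈ G, Tx x ω)^2 ∂μ := by
            apply integral_congr_ae; filter_upwards with ω; simp [Pi.pow_apply]
          rw [h2] at h
          exact h
        have hmean : |∫ ω, ∑ x ∈ G, Tx x ω ∂μ| ≤ (1+c) * τ m := by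
          rw [integral_finset_sum _ (fun i _ => hIntx i)]
          calc |∑ x ∈ G, ∫ ω, Tx x ω ∂μ| ≤ ∑ x ∈ G, |∫ ω, Tx x ω ∂μ| :=
              Finset.abs_sum_le_sum_abs _ _
            _ ≤ ∑ x ∈ G, (1+c) * lam x := Finset.sum_le_sum (fun i _ => hintx i)
            _ = (1+c) * ∑ x ∈ G, lam x := by rw [Finset.mul_sum]
            _ ≤ (1+c) * τ m := by nlinarith
        have hmsq : (∫ ω, ∑ x ∈ G, Tx x ω ∂μ)^2 ≤ ((1+c) * τ m)^2 := by
          rw [← sq_abs]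
          exact pow_le_pow_left₀ (abs_nonneg _) hmean 2
        have hvarG : ProbabilityTheory.variance (fun ω => ∑ x ∈ G, Tx x ω) μ ≤ c * τ m :=
          (hvarsum G).trans (by nlinarith)
        linarith
      have hRm2 : ∫⁻ ω, ENNReal.ofReal ((Rm ω)^2) ∂μ
          ≤ ENNReal.ofReal (c * τ m + ((1+c) * τ m)^2) := by
        have hDtend : ∀ᵐ ω ∂μ, Filter.Tendsto
            (fun j => ENNReal.ofReal ((∑ x ∈ e (j + m) \ e m, Tx x ω)^2)) Filter.atTop
            (nhds (ENNReal.ofReal ((Rm ω)^2))) := by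
          filter_upwards [hsummae] with ω hω
          have hTsum : Filter.Tendsto (fun F : Finset X => ∑ x ∈ F, Tx x ω)
              Filter.atTop (nhds (T ω)) := by
            rw [hT ω]; exact hω.hasSum
          have hcomp : Filter.Tendsto (fun j => ∑ x ∈ e (j + m), Tx x ω)
              Filter.atTop (nhds (T ω)) :=
            hTsum.comp (hetend.comp (Filter.tendsto_add_atTop_nat m))
          have hdiff : ∀ j, ∑ x ∈ e (j + m) \ e m, Tx x ω
              = (∑ x ∈ e (j + m), Tx x ω) - Sm ω := by
            intro j
            have hsub : e m ⊆ e (j + m) := hemono (Nat.le_add_left m j)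
            rw [eq_sub_iff_add_eq]
            exact Finset.sum_sdiff hsub
          have h2 : Filter.Tendsto (fun j => ∑ x ∈ e (j + m) \ e m, Tx x ω)
              Filter.atTop (nhds (Rm ω)) := by
            simp only [hdiff]
            exact hcomp.sub tendsto_const_nhds
          exact (ENNReal.continuous_ofReal.tendsto _).comp
            (((continuous_pow 2).tendsto _).comp h2)
        have hDmeas : ∀ j : ℕ, Measurable
            (fun ω => ENNReal.ofReal ((∑ x ∈ e (j + m) \ e m, Tx x ω)^2)) := fun j =>
          ((Finset.measurable_sum _ (fun i _ => hTxmeas i)).pow_const 2).ennreal_ofReal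
        have hcongr : ∫⁻ ω, ENNReal.ofReal ((Rm ω)^2) ∂μ
            = ∫⁻ ω, Filter.liminf
              (fun j => ENNReal.ofReal ((∑ x ∈ e (j + m) \ e m, Tx x ω)^2)) Filter.atTop ∂μ := by
          apply lintegral_congr_ae
          filter_upwards [hDtend] with ω hω
          exact hω.liminf_eq.symm
        rw [hcongr]
        refine (lintegral_liminf_le hDmeas).trans ?_
        have hbd : ∀ j, ∫⁻ ω, ENNReal.ofReal ((∑ x ∈ e (j + m) \ e m, Tx x ω)^2) ∂μ
            ≤ ENNReal.ofReal (c * τ m + ((1+c) * τ m)^2) := fun j =>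
          hG _ Finset.sdiff_disjoint
        refine le_trans (Filter.liminf_le_liminf (Filter.Eventually.of_forall hbd)) ?_
        simp [Filter.liminf_const]
      set q1 : ℝ := Real.sqrt (c * n) with hq1
      set q2 : ℝ := Real.sqrt (c * τ m + ((1+c) * τ m)^2) with hq2
      have hq1nn : 0 ≤ q1 := Real.sqrt_nonneg _
      have hq2nn : 0 ≤ q2 := Real.sqrt_nonneg _
      set F : Ω → ℝ := fun ω => Sm ω - ∫ ω', Sm ω' ∂μ with hF
      set Gm : Ω → ℝ := fun ω => Rm ω - ∫ ω', Rm ω' ∂μ with hGm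
      have hevdef : ProbabilityTheory.evariance T μ
          = (eLpNorm (fun ω => T ω - ∫ ω', T ω' ∂μ) 2 μ)^2 := by
        rw [MomentAux.sq_eLpNorm_two]; rfl
      have hTdec : (fun ω => T ω - ∫ ω', T ω' ∂μ) = fun ω => F ω + Gm ω := by
        funext ω
        have hTi : ∫ ω', T ω' ∂μ = (∫ ω', Sm ω' ∂μ) + ∫ ω', Rm ω' ∂μ := by
          rw [← integral_add hSmInt hRmInt]
          apply integral_congr_ae; filter_upwards with ω'
          simp [hRm_def]
        simp only [hF, hGm, hRm_def]
        rw [hTi]; ring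
      have hFel : eLpNorm F 2 μ ≤ ENNReal.ofReal q1 := by
        apply MomentAux.le_of_sq_le_sq
        rw [MomentAux.sq_eLpNorm_two]
        have heq : ∫⁻ ω, ((‖F ω‖₊ : ℝ≥0∞))^2 ∂μ = ProbabilityTheory.evariance Sm μ := rfl
        rw [heq, ← hSmMem.ofReal_variance_eq]
        have hv : ProbabilityTheory.variance Sm μ ≤ c * n := by
          refine (hvarsum (e m)).trans ?_
          have h := hs_le (e m)
          nlinarith
        calc ENNReal.ofReal (ProbabilityTheory.variance Sm μ)
            ≤ ENNReal.ofReal (c * n) := ENNReal.ofReal_le_ofReal hv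
          _ = (ENNReal.ofReal q1)^2 := by
            rw [← ENNReal.ofReal_pow hq1nn, hq1, Real.sq_sqrt (by positivity)]
      have hRel : eLpNorm Rm 2 μ ≤ ENNReal.ofReal q2 := by
        apply MomentAux.le_of_sq_le_sq
        rw [MomentAux.sq_eLpNorm_two]
        have hcg : ∀ ω, ((‖Rm ω‖₊ : ℝ≥0∞))^2 = ENNReal.ofReal ((Rm ω)^2) := fun ω =>
          MomentAux.coe_nnnorm_sq _
        rw [lintegral_congr hcg]
        refine hRm2.trans ?_
        rw [← ENNReal.ofReal_pow hq2nn, hq2, Real.sq_sqrt hexprnn]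
      have hμ0 : μ ≠ 0 := by
        intro h0
        have h1 : μ Set.univ = 1 := measure_univ
        rw [h0] at h1; simp at h1
      have hGel : eLpNorm Gm 2 μ ≤ ENNReal.ofReal (2 * q2) := by
        have h1 : eLpNorm Gm 2 μ
            ≤ eLpNorm Rm 2 μ + eLpNorm (fun _ : Ω => ∫ ω', Rm ω' ∂μ) 2 μ :=
          eLpNorm_sub_le hRmMem.aestronglyMeasurable aestronglyMeasurable_const one_le_two
        have h2 : eLpNorm (fun _ : Ω => ∫ ω', Rm ω' ∂μ) 2 μ ≤ eLpNorm Rm 2 μ := by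
          rw [eLpNorm_const _ two_ne_zero hμ0]
          simp only [measure_univ, ENNReal.one_rpow, mul_one]
          have h3 : ((‖∫ ω', Rm ω' ∂μ‖₊ : ℝ≥0∞)) ≤ eLpNorm Rm 1 μ := by
            rw [eLpNorm_one_eq_lintegral_enorm, show ((‖∫ ω', Rm ω' ∂μ‖₊ : ℝ≥0∞)) = ‖∫ ω', Rm ω' ∂μ‖ₑ from rfl, ← ofReal_norm_eq_enorm]
            calc ENNReal.ofReal ‖∫ ω', Rm ω' ∂μ‖
                ≤ ENNReal.ofReal (∫ ω', ‖Rm ω'‖ ∂μ) :=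
                  ENNReal.ofReal_le_ofReal (norm_integral_le_integral_norm _)
              _ = ∫⁻ ω', ENNReal.ofReal ‖Rm ω'‖ ∂μ :=
                  ofReal_integral_eq_lintegral_ofReal hRmInt.norm
                    (Filter.Eventually.of_forall fun ω => norm_nonneg _)
              _ = ∫⁻ ω', ((‖Rm ω'‖₊ : ℝ≥0∞)) ∂μ :=
                  lintegral_congr fun ω => ofReal_norm_eq_enorm _
          exact h3.trans
            (eLpNorm_le_eLpNorm_of_exponent_le one_le_two hRmMem.aestronglyMeasurable)
        calc eLpNorm Gm 2 μ ≤ eLpNorm Rm 2 μ + eLpNorm Rm 2 μ :=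
            h1.trans (add_le_add le_rfl h2)
          _ ≤ ENNReal.ofReal q2 + ENNReal.ofReal q2 := add_le_add hRel hRel
          _ = ENNReal.ofReal (2 * q2) := by
            rw [← ENNReal.ofReal_add hq2nn hq2nn]; ring_nf
      have hevT : ProbabilityTheory.evariance T μ ≤ ENNReal.ofReal ((q1 + 2 * q2)^2) := by
        rw [hevdef, hTdec]
        have hadd : eLpNorm (fun ω => F ω + Gm ω) 2 μ
            ≤ ENNReal.ofReal q1 + ENNReal.ofReal (2 * q2) := by
          refine (eLpNorm_add_le (hSmMem.sub (memLp_const _)).aestronglyMeasurable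
            (hRmMem.sub (memLp_const _)).aestronglyMeasurable one_le_two).trans ?_
          exact add_le_add hFel hGel
        calc (eLpNorm (fun ω => F ω + Gm ω) 2 μ)^2
            ≤ (ENNReal.ofReal q1 + ENNReal.ofReal (2 * q2))^2 := by
              rw [pow_two, pow_two]; exact mul_le_mul' hadd hadd
          _ = ENNReal.ofReal ((q1 + 2 * q2)^2) := by
              rw [← ENNReal.ofReal_add hq1nn (by positivity),
                ← ENNReal.ofReal_pow (by positivity)]
      exact ENNReal.toReal_le_of_le_ofReal (by positivity) hevT
    have hBtend : Filter.Tendsto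
        (fun m => (Real.sqrt (c * n) + 2 * Real.sqrt (c * τ m + ((1+c) * τ m)^2))^2)
        Filter.atTop (nhds (c * n)) := by
      have h1 : Filter.Tendsto (fun m => c * τ m + ((1+c) * τ m)^2)
          Filter.atTop (nhds 0) := by
        have h2 := (hτ0.const_mul c).add ((hτ0.const_mul (1+c)).pow 2)
        simpa using h2
      have h2 : Filter.Tendsto (fun m => Real.sqrt (c * τ m + ((1+c) * τ m)^2))
          Filter.atTop (nhds 0) := by
        have h3 := (Real.continuous_sqrt.tendsto 0).comp h1
        simpa [Function.comp_def] using h3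
      have h3 := ((tendsto_const_nhds (x := Real.sqrt (c * n))).add (h2.const_mul 2)).pow 2
      simp only [mul_zero, add_zero] at h3
      rwa [Real.sq_sqrt (by positivity)] at h3
    exact ge_of_tendsto' hBtend hτkey
  · -- Part (iii)
    intro hα3
    have hb3 : ∀ k : ℕ, |β k| ^ 3 ≤ c * k := by
      intro k
      cases k with
      | zero => simp [hβdef]
      | succ m => simpa [hβdef] using hα3 (m+1) (Nat.succ_le_succ (Nat.zero_le m))
    have hb1 : ∀ k : ℕ, |β k| ≤ (1 + c) * k := by
      intro k
      cases k with
      | zero => simp [hβdef]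
      | succ m =>
        have h := hb3 (m+1)
        have ha0 : (0:ℝ) ≤ |β (m+1)| := abs_nonneg _
        push_cast at h ⊢
        rcases le_total (|β (m+1)|) 1 with h1 | h1
        · nlinarith [Nat.cast_nonneg (α := ℝ) m]
        · have haa : |β (m+1)| ≤ |β (m+1)| ^ 3 := by
            nlinarith [mul_nonneg (mul_nonneg ha0 (by linarith : (0:ℝ) ≤ |β (m+1)| - 1))
              (by linarith : (0:ℝ) ≤ |β (m+1)| + 1)]
          nlinarith [Nat.cast_nonneg (α := ℝ) m]
    have hxb : ∀ x, ∫⁻ ω, ENNReal.ofReal (|Tx x ω - ∫ ω', Tx x ω' ∂μ| ^ 3) ∂μ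
        ≤ ENNReal.ofReal (8 * c * lam x) := by
      intro x
      set m := ∫ ω', Tx x ω' ∂μ with hm
      have hIntx : Integrable (Tx x) μ := hInt (1+c) (by positivity) hb1 x
      have hA : ∫⁻ ω, ENNReal.ofReal (|Tx x ω| ^ 3) ∂μ ≤ ENNReal.ofReal (c * lam x) := by
        have h : ∀ ω, ENNReal.ofReal (|Tx x ω| ^ 3)
            = (fun k => ENNReal.ofReal (|β k| ^ 3)) (N x ω) := fun ω => by rw [hβ]
        rw [lintegral_congr h]
        exact momle c hc.le x _ (fun k => ENNReal.ofReal_le_ofReal (hb3 k))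
      have hA1 : ENNReal.ofReal |m| ≤ ∫⁻ ω, ENNReal.ofReal |Tx x ω| ∂μ := by
        have h1 : |m| ≤ ∫ ω, |Tx x ω| ∂μ := by
          simpa [Real.norm_eq_abs] using norm_integral_le_integral_norm (μ := μ) (Tx x)
        calc ENNReal.ofReal |m| ≤ ENNReal.ofReal (∫ ω, |Tx x ω| ∂μ) := ENNReal.ofReal_le_ofReal h1
          _ = ∫⁻ ω, ENNReal.ofReal |Tx x ω| ∂μ :=
            ofReal_integral_eq_lintegral_ofReal hIntx.abs
              (Filter.Eventually.of_forall fun ω => abs_nonneg _)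
      have hm3 : ENNReal.ofReal (|m| ^ 3) ≤ ENNReal.ofReal (c * lam x) := by
        have hJ : (∫⁻ ω, ENNReal.ofReal |Tx x ω| ∂μ) ^ 3
            ≤ ∫⁻ ω, (ENNReal.ofReal |Tx x ω|) ^ 3 ∂μ :=
          MomentAux.lintegral_pow_three_le μ _ ((hTxmeas x).abs.ennreal_ofReal).aemeasurable
        have he : ∀ ω, (ENNReal.ofReal |Tx x ω|) ^ 3 = ENNReal.ofReal (|Tx x ω| ^ 3) := fun ω =>
          (ENNReal.ofReal_pow (abs_nonneg _) 3).symm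
        rw [lintegral_congr he] at hJ
        calc ENNReal.ofReal (|m| ^ 3) = (ENNReal.ofReal |m|) ^ 3 :=
            (ENNReal.ofReal_pow (abs_nonneg _) 3)
          _ ≤ (∫⁻ ω, ENNReal.ofReal |Tx x ω| ∂μ) ^ 3 := pow_le_pow_left' hA1 3
          _ ≤ ∫⁻ ω, ENNReal.ofReal (|Tx x ω| ^ 3) ∂μ := hJ
          _ ≤ ENNReal.ofReal (c * lam x) := hA
      calc ∫⁻ ω, ENNReal.ofReal (|Tx x ω - m| ^ 3) ∂μ
          ≤ ∫⁻ ω, (4 * ENNReal.ofReal (|Tx x ω| ^ 3) + 4 * ENNReal.ofReal (|m| ^ 3)) ∂μ := by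
            refine lintegral_mono (fun ω => ?_)
            have h1 : |Tx x ω - m| ^ 3 ≤ 4 * |Tx x ω| ^ 3 + 4 * |m| ^ 3 := by
              have habs2 : |Tx x ω - m| ≤ |Tx x ω| + |m| := abs_sub _ _
              have h2 : |Tx x ω - m| ^ 3 ≤ (|Tx x ω| + |m|) ^ 3 :=
                pow_le_pow_left₀ (abs_nonneg _) habs2 3
              exact h2.trans (MomentAux.cube_bound _ _ (abs_nonneg _) (abs_nonneg _))
            calc ENNReal.ofReal (|Tx x ω - m| ^ 3)
                ≤ ENNReal.ofReal (4 * |Tx x ω| ^ 3 + 4 * |m| ^ 3) := ENNReal.ofReal_le_ofReal h1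
              _ = 4 * ENNReal.ofReal (|Tx x ω| ^ 3) + 4 * ENNReal.ofReal (|m| ^ 3) := by
                  rw [ENNReal.ofReal_add (by positivity) (by positivity),
                    ENNReal.ofReal_mul (by norm_num), ENNReal.ofReal_mul (by norm_num)]
                  norm_num
        _ = 4 * ∫⁻ ω, ENNReal.ofReal (|Tx x ω| ^ 3) ∂μ + 4 * ENNReal.ofReal (|m| ^ 3) := by
            rw [lintegral_add_right _ measurable_const,
              lintegral_const_mul 4 (((hTxmeas x).abs.pow_const 3).ennreal_ofReal),
              lintegral_const, measure_univ, mul_one]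
        _ ≤ 4 * ENNReal.ofReal (c * lam x) + 4 * ENNReal.ofReal (c * lam x) := by gcongr
        _ = ENNReal.ofReal (8 * c * lam x) := by
            rw [show (8:ℝ) * c * lam x = 8 * (c * lam x) by ring,
              ENNReal.ofReal_mul (by norm_num : (0:ℝ) ≤ 8)]
            rw [ENNReal.ofReal_ofNat]
            ring
    calc ∑' x, ∫⁻ ω, ENNReal.ofReal (|Tx x ω - ∫ ω', Tx x ω' ∂μ| ^ 3) ∂μ
        ≤ ∑' x, ENNReal.ofReal (8 * c * lam x) := ENNReal.tsum_le_tsum hxb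
      _ = ENNReal.ofReal (8 * c * n) := by
          have h := hsum_ofReal (8*c) (by positivity)
          simpa [mul_assoc] using h
end

section
/- Let n and k be integers with 1 ≤ k ≤ n−1 and let θ ∈ [0,1]. Then C(n,k)·θ^k·(1−θ)^{n−k} ≤ C(n,k)·(k/n)^k·(1−k/n)^{n−k} ≤ √(n/(2πk(n−k))), where C(n,k) is the binomial coefficient. That is, over θ the binomial probability mass function f_k^n(θ) := C(n,k)θ^k(1−θ)^{n−k} is maximized at θ = k/n, and its maximal value is at most √(n/(2πk(n−k))). -/
open Real Stirling

private lemma sqrt_pi_le_stirlingSeq (j : ℕ) : Real.sqrt Real.pi ≤ stirlingSeq (j + 1) :=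
  stirlingSeq'_antitone.le_of_tendsto
    (tendsto_stirlingSeq_sqrt_pi.comp (Filter.tendsto_add_atTop_nat 1)) j

private lemma maximize_aux (n k : ℕ) (hk : 1 ≤ k) (hkn : k + 1 ≤ n) (θ : ℝ)
    (h0 : 0 ≤ θ) (h1 : θ ≤ 1) :
    θ ^ k * (1 - θ) ^ (n - k) ≤ ((k : ℝ) / n) ^ k * ((((n - k : ℕ)) : ℝ) / n) ^ (n - k) := by
  have hn0 : 0 < (n : ℝ) := by exact_mod_cast Nat.lt_of_lt_of_le Nat.zero_lt_one (by omega)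
  have hkr : 0 < (k : ℝ) := by exact_mod_cast hk
  have hmn : 0 < ((n - k : ℕ) : ℝ) := by
    have : 0 < n - k := by omega
    exact_mod_cast this
  set a : ℝ := (k : ℝ) / n with ha
  set b : ℝ := ((n - k : ℕ) : ℝ) / n with hb
  have hapos : 0 < a := by positivity
  have hbpos : 0 < b := by positivity
  have hab : a + b = 1 := by
    rw [ha, hb, ← add_div, div_eq_one_iff_eq hn0.ne']
    have : ((n - k : ℕ) : ℝ) = (n : ℝ) - k := by
      have : k ≤ n := by omega
      push_cast [this]; ring
    rw [this]; ring
  set p₁ : ℝ := θ / a with hp₁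
  set p₂ : ℝ := (1 - θ) / b with hp₂
  have hp₁0 : 0 ≤ p₁ := by positivity
  have hp₂0 : 0 ≤ p₂ := div_nonneg (by linarith) hbpos.le
  have hgm : p₁ ^ a * p₂ ^ b ≤ 1 := by
    have h := Real.geom_mean_le_arith_mean2_weighted hapos.le hbpos.le hp₁0 hp₂0 hab
    have : a * p₁ + b * p₂ = 1 := by
      rw [hp₁, hp₂]
      field_simp
      ring
    linarith [h, this ▸ h]
  have han : a * (n : ℝ) = (k : ℝ) := by
    rw [ha]; field_simp
  have hbn : b * (n : ℝ) = ((n - k : ℕ) : ℝ) := by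
    rw [hb]; field_simp
  have key : p₁ ^ k * p₂ ^ (n - k) ≤ 1 := by
    have base0 : 0 ≤ p₁ ^ a * p₂ ^ b := by positivity
    have h2 : (p₁ ^ a * p₂ ^ b) ^ ((n : ℕ) : ℝ) ≤ 1 :=
      Real.rpow_le_one base0 hgm (by positivity)
    calc p₁ ^ k * p₂ ^ (n - k)
        = p₁ ^ ((k : ℕ) : ℝ) * p₂ ^ (((n - k : ℕ)) : ℝ) := by
          rw [Real.rpow_natCast, Real.rpow_natCast]
      _ = (p₁ ^ a * p₂ ^ b) ^ ((n : ℕ) : ℝ) := by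
          rw [Real.mul_rpow (Real.rpow_nonneg hp₁0 _) (Real.rpow_nonneg hp₂0 _),
            ← Real.rpow_mul hp₁0, ← Real.rpow_mul hp₂0, han, hbn]
      _ ≤ 1 := h2
  have hθ : θ = a * p₁ := by rw [hp₁]; field_simp
  have hθ' : 1 - θ = b * p₂ := by rw [hp₂]; field_simp
  calc θ ^ k * (1 - θ) ^ (n - k) = (a ^ k * b ^ (n - k)) * (p₁ ^ k * p₂ ^ (n - k)) := by
        rw [hθ', hθ, mul_pow, mul_pow]; ring
    _ ≤ (a ^ k * b ^ (n - k)) * 1 := by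
        refine mul_le_mul_of_nonneg_left key (by positivity)
    _ = a ^ k * b ^ (n - k) := by ring

/-- The binomial pmf `θ ↦ C(n,k) θ^k (1-θ)^{n-k}` is maximized over `θ ∈ [0,1]` at
`θ = k/n`, with maximal value at most `√(n/(2πk(n-k)))`, for `1 ≤ k ≤ n-1`. -/
theorem binomial_pmf_max
    (n k : ℕ) (hk : 1 ≤ k) (hkn : k + 1 ≤ n) (θ : ℝ) (hθ : θ ∈ Set.Icc (0 : ℝ) 1) :
    (n.choose k : ℝ) * θ ^ k * (1 - θ) ^ (n - k)
      ≤ (n.choose k : ℝ) * ((k : ℝ) / n) ^ k * (1 - (k : ℝ) / n) ^ (n - k)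
    ∧ (n.choose k : ℝ) * ((k : ℝ) / n) ^ k * (1 - (k : ℝ) / n) ^ (n - k)
      ≤ Real.sqrt ((n : ℝ) / (2 * Real.pi * k * ((n : ℝ) - k))) := by
  obtain ⟨h0, h1⟩ := hθ
  have hn0 : 0 < (n : ℝ) := by exact_mod_cast Nat.lt_of_lt_of_le Nat.zero_lt_one (by omega)
  have hkn' : k ≤ n := by omega
  have hcast : ((n - k : ℕ) : ℝ) = (n : ℝ) - k := by push_cast [hkn']; ring
  have hone : 1 - (k : ℝ) / n = ((n - k : ℕ) : ℝ) / n := by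
    rw [hcast]; field_simp
  constructor
  · rw [hone, mul_assoc, mul_assoc]
    exact mul_le_mul_of_nonneg_left (maximize_aux n k hk hkn θ h0 h1) (by positivity)
  · rw [hone, ← hcast, Nat.cast_choose ℝ hkn']
    set m := n - k with hm
    have hm1 : 1 ≤ m := by omega
    have hkm : k + m = n := by omega
    set E := Real.exp 1 with hE
    have hE0 : 0 < E := Real.exp_pos 1
    have hK : 0 < (k : ℝ) := by exact_mod_cast hk
    have hM : 0 < (m : ℝ) := by exact_mod_cast hm1
    have hπpos : 0 < Real.sqrt Real.pi := Real.sqrt_pos.mpr Real.pi_pos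
    have hfact : ∀ j : ℕ, 1 ≤ j →
        (j.factorial : ℝ) = stirlingSeq j * (Real.sqrt (2 * j) * ((j : ℝ) / E) ^ j) := by
      intro j hj
      have hj0 : 0 < (j : ℝ) := by exact_mod_cast hj
      have hne : Real.sqrt (2 * j) * ((j : ℝ) / E) ^ j ≠ 0 := by positivity
      rw [stirlingSeq, div_mul_cancel₀ _ hne]
    have hsNpos : 0 < stirlingSeq n := by
      have h := stirlingSeq'_pos (n - 1)
      rwa [Nat.sub_add_cancel (by omega : 1 ≤ n)] at h
    have hsk : stirlingSeq n ≤ stirlingSeq k := by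
      have h := stirlingSeq'_antitone (show k - 1 ≤ n - 1 by omega)
      simp only [Function.comp_apply, Nat.succ_eq_add_one] at h
      rwa [Nat.sub_add_cancel hk, Nat.sub_add_cancel (by omega : 1 ≤ n)] at h
    have hπm : Real.sqrt Real.pi ≤ stirlingSeq m := by
      have h := sqrt_pi_le_stirlingSeq (m - 1)
      rwa [Nat.sub_add_cancel hm1] at h
    have hkfac : stirlingSeq n * (Real.sqrt (2 * k) * ((k : ℝ) / E) ^ k) ≤ (k.factorial : ℝ) := by
      rw [hfact k hk]
      exact mul_le_mul_of_nonneg_right hsk (by positivity)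
    have hmfac : Real.sqrt Real.pi * (Real.sqrt (2 * m) * ((m : ℝ) / E) ^ m) ≤ (m.factorial : ℝ) := by
      rw [hfact m hm1]
      exact mul_le_mul_of_nonneg_right hπm (by positivity)
    have hDpos : 0 < stirlingSeq n * (Real.sqrt (2 * k) * ((k : ℝ) / E) ^ k) *
        (Real.sqrt Real.pi * (Real.sqrt (2 * m) * ((m : ℝ) / E) ^ m)) := by positivity
    have step1 : (n.factorial : ℝ) / ((k.factorial : ℝ) * (m.factorial : ℝ))
        ≤ stirlingSeq n * (Real.sqrt (2 * n) * ((n : ℝ) / E) ^ n) /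
          (stirlingSeq n * (Real.sqrt (2 * k) * ((k : ℝ) / E) ^ k) *
            (Real.sqrt Real.pi * (Real.sqrt (2 * m) * ((m : ℝ) / E) ^ m))) := by
      rw [hfact n (by omega)]
      exact div_le_div_of_nonneg_left (by positivity) hDpos
        (mul_le_mul hkfac hmfac (by positivity) (by positivity))
    have hEn : E ^ n = E ^ k * E ^ m := by rw [← pow_add, hkm]
    have step2 : stirlingSeq n * (Real.sqrt (2 * n) * ((n : ℝ) / E) ^ n) /
          (stirlingSeq n * (Real.sqrt (2 * k) * ((k : ℝ) / E) ^ k) *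
            (Real.sqrt Real.pi * (Real.sqrt (2 * m) * ((m : ℝ) / E) ^ m)))
          * (((k : ℝ) / n) ^ k * ((m : ℝ) / n) ^ m)
        = Real.sqrt (2 * n) /
          (Real.sqrt Real.pi * Real.sqrt (2 * k) * Real.sqrt (2 * m)) := by
      have hNn : ((n : ℝ)) ^ n = (n : ℝ) ^ k * (n : ℝ) ^ m := by rw [← pow_add, hkm]
      rw [div_pow, div_pow, div_pow, div_pow, div_pow]
      field_simp
      rw [hEn, hNn]
      ring
    have step3 : Real.sqrt (2 * n) /
          (Real.sqrt Real.pi * Real.sqrt (2 * k) * Real.sqrt (2 * m))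
        = Real.sqrt ((n : ℝ) / (2 * Real.pi * k * m)) := by
      rw [← Real.sqrt_mul Real.pi_pos.le, ← Real.sqrt_mul (by positivity),
        ← Real.sqrt_div (by positivity)]
      congr 1
      have hπ := Real.pi_pos
      field_simp
    calc (n.factorial : ℝ) / ((k.factorial : ℝ) * (m.factorial : ℝ)) * ((k : ℝ) / n) ^ k * ((m : ℝ) / n) ^ m
        ≤ stirlingSeq n * (Real.sqrt (2 * n) * ((n : ℝ) / E) ^ n) /
          (stirlingSeq n * (Real.sqrt (2 * k) * ((k : ℝ) / E) ^ k) *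
            (Real.sqrt Real.pi * (Real.sqrt (2 * m) * ((m : ℝ) / E) ^ m)))
          * (((k : ℝ) / n) ^ k * ((m : ℝ) / n) ^ m) := by
          rw [mul_assoc]
          exact mul_le_mul_of_nonneg_right step1 (by positivity)
      _ = Real.sqrt ((n : ℝ) / (2 * Real.pi * k * m)) := by rw [step2, step3]
end
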